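/- arXiv:1711.00433 — 5 statements merged into one kernel-verified Lean document; each statement's English description precedes it below -/
import Mathlib

section
/- For any permutation σ in the symmetric group S_p and the full cycle γ = (1 2 ... p), the number of cycles satisfies |σ| + |σγ⁻¹| ≤ p + 1. -/
open Equiv Equiv.Perm

namespace BianeAux

variable {α : Type*} [Fintype α] [DecidableEq α]

/-- Number of cycles (orbits) of a permutation. -/
noncomputable def cc (σ : Perm α) : ℕ :=
  Nat.card (Quotient (Equiv.Perm.SameCycle.setoid σ))

lemma cc_eq (σ : Perm α) :
    cc σ = σ.cycleFactorsFinset.card + (Fintype.card α - σ.support.card) := by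
  classical
  set F : α → (↥σ.cycleFactorsFinset ⊕ {x : α // σ x = x}) := fun a =>
    if h : σ a = a then Sum.inr ⟨a, h⟩
    else Sum.inl ⟨σ.cycleOf a, by
      rw [cycleOf_mem_cycleFactorsFinset_iff, mem_support]; exact h⟩ with hF
  have hresp : ∀ a b : α, σ.SameCycle a b → F a = F b := by
    intro a b hab
    by_cases ha : σ a = a
    · obtain ⟨i, hi⟩ := hab
      have hba : b = a := by
        rw [← hi, zpow_apply_eq_self_of_apply_eq_self ha]
      subst hba; rfl
    · have hb : σ b ≠ b := by
        intro hb
        obtain ⟨i, hi⟩ := hab.symm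
        rw [zpow_apply_eq_self_of_apply_eq_self hb] at hi
        exact ha (hi ▸ hb)
      simp only [hF, dif_neg ha, dif_neg hb]
      exact congrArg Sum.inl (Subtype.ext hab.cycleOf_eq)
  have hFpos : ∀ (a : α) (h : σ a = a), F a = Sum.inr ⟨a, h⟩ := fun a h => dif_pos h
  have hFneg : ∀ (a : α) (h : ¬ σ a = a), F a = Sum.inl ⟨σ.cycleOf a, by
      rw [cycleOf_mem_cycleFactorsFinset_iff, mem_support]; exact h⟩ :=
    fun a h => dif_neg h
  set G : Quotient (Equiv.Perm.SameCycle.setoid σ) → _ := Quotient.lift F hresp with hG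
  have hbij : Function.Bijective G := by
    constructor
    · intro q1 q2
      induction q1 using Quotient.ind
      induction q2 using Quotient.ind
      rename_i a b
      intro h
      apply Quotient.sound
      change σ.SameCycle a b
      change F a = F b at h
      by_cases ha : σ a = a <;> by_cases hb : σ b = b
      · rw [hFpos a ha, hFpos b hb] at h
        have : a = b := by simpa using h
        subst this; exact SameCycle.refl σ a
      · rw [hFpos a ha, hFneg b hb] at h
        exact absurd h (by simp)
      · rw [hFneg a ha, hFpos b hb] at h
        exact absurd h (by simp)
      · rw [hFneg a ha, hFneg b hb] at h
        have hco : σ.cycleOf a = σ.cycleOf b := by simpa using h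
        by_contra hn
        have h1 := cycleOf_apply_of_not_sameCycle hn
        rw [hco, cycleOf_apply_self] at h1
        exact hb h1
    · rintro (⟨c, hc⟩ | ⟨x, hx⟩)
      · have hc1 : c.IsCycle := (mem_cycleFactorsFinset_iff.mp hc).1
        obtain ⟨x, hx, -⟩ := hc1
        have hxc : x ∈ c.support := mem_support.mpr hx
        have hcx : c = σ.cycleOf x :=
          (eq_cycleOf_of_mem_cycleFactorsFinset_iff σ c hc x).mpr hxc
        have hσx : σ x ≠ x := mem_support.mp (mem_cycleFactorsFinset_support_le hc hxc)
        refine ⟨Quotient.mk _ x, ?_⟩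
        show F x = _
        simp only [hF, dif_neg hσx]
        exact congrArg Sum.inl (Subtype.ext hcx.symm)
      · exact ⟨Quotient.mk _ x, by show F x = _; simp only [hF, dif_pos hx]⟩
  have hcard : cc σ = Nat.card (↥σ.cycleFactorsFinset ⊕ {x : α // σ x = x}) :=
    Nat.card_eq_of_bijective G hbij
  rw [hcard, Nat.card_sum, Nat.card_eq_finsetCard]
  congr 1
  rw [Nat.card_eq_fintype_card, Fintype.card_subtype, ← Finset.card_compl σ.support]
  congr 1
  ext z
  simp [mem_support]

lemma cc_one : cc (1 : Perm α) = Fintype.card α := by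
  rw [cc_eq]; simp

/-- One swap changes the cycle count by at most one (one direction). -/
lemma cc_swap_mul_le (σ : Perm α) {x y : α} (hxy : x ≠ y) :
    cc (Equiv.swap x y * σ) ≤ cc σ + 1 := by
  classical
  set ρ : Perm α := Equiv.swap x y * σ with hρ
  set R : α → α → Prop := fun a b => ρ.SameCycle a b ∨
    (ρ.SameCycle a x ∧ ρ.SameCycle y b) ∨ (ρ.SameCycle a y ∧ ρ.SameCycle x b) with hRdef
  have Rrefl : ∀ a, R a a := fun a => Or.inl (SameCycle.refl ρ a)
  have Rsymm : ∀ {a b}, R a b → R b a := by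
    rintro a b (h | ⟨h1, h2⟩ | ⟨h1, h2⟩)
    · exact Or.inl h.symm
    · exact Or.inr (Or.inr ⟨h2.symm, h1.symm⟩)
    · exact Or.inr (Or.inl ⟨h2.symm, h1.symm⟩)
  have Rtrans : ∀ {a b c}, R a b → R b c → R a c := by
    rintro a b c (h | ⟨h1, h2⟩ | ⟨h1, h2⟩) (h' | ⟨h1', h2'⟩ | ⟨h1', h2'⟩)
    · exact Or.inl (h.trans h')
    · exact Or.inr (Or.inl ⟨h.trans h1', h2'⟩)
    · exact Or.inr (Or.inr ⟨h.trans h1', h2'⟩)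
    · exact Or.inr (Or.inl ⟨h1, h2.trans h'⟩)
    · exact Or.inl (h1.trans (((h2.trans h1').symm).trans h2'))
    · exact Or.inl (h1.trans h2')
    · exact Or.inr (Or.inr ⟨h1, h2.trans h'⟩)
    · exact Or.inl (h1.trans h2')
    · exact Or.inl (h1.trans (((h2.trans h1').symm).trans h2'))
  set Rs : Setoid α := ⟨R, ⟨Rrefl, @Rsymm, @Rtrans⟩⟩ with hRs
  -- the one-step move
  have step : ∀ a, R a (σ a) := by
    intro a
    have hσ : σ a = Equiv.swap x y (ρ a) := by
      rw [hρ, ← mul_apply, Equiv.swap_mul_self_mul]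
    by_cases h1 : ρ a = x
    · rw [hσ, h1, Equiv.swap_apply_left]
      exact Or.inr (Or.inl ⟨⟨1, by simpa using h1⟩, SameCycle.refl ρ y⟩)
    · by_cases h2 : ρ a = y
      · rw [hσ, h2, Equiv.swap_apply_right]
        exact Or.inr (Or.inr ⟨⟨1, by simpa using h2⟩, SameCycle.refl ρ x⟩)
      · rw [hσ, Equiv.swap_apply_of_ne_of_ne h1 h2]
        exact Or.inl ⟨1, by simp⟩
  have key : ∀ (i : ℤ) (a : α), R a ((σ ^ i) a) := by
    intro i
    induction i using Int.induction_on with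
    | zero => intro a; simpa using Rrefl a
    | succ i ih =>
      intro a
      have : (σ ^ ((i : ℤ) + 1)) a = (σ ^ (i : ℤ)) (σ a) := by
        rw [zpow_add_one, mul_apply]
      rw [this]
      exact Rtrans (step a) (ih (σ a))
    | pred i ih =>
      intro a
      have : (σ ^ (-(i : ℤ) - 1)) a = (σ ^ (-(i : ℤ))) (σ⁻¹ a) := by
        rw [zpow_sub_one, mul_apply]
      rw [this]
      have h1 : R a (σ⁻¹ a) := by
        have := step (σ⁻¹ a)
        rw [show σ (σ⁻¹ a) = a from σ.apply_symm_apply a] at this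
        exact Rsymm this
      exact Rtrans h1 (ih (σ⁻¹ a))
  have hle : ∀ a b : α, σ.SameCycle a b → R a b := by
    rintro a b ⟨i, rfl⟩
    exact key i a
  -- surjection from Quotient (setoid σ) onto Quotient Rs
  have hsurj : Function.Surjective
      (Quotient.map' (s₁ := Equiv.Perm.SameCycle.setoid σ) (s₂ := Rs) id hle) := by
    intro q
    induction q using Quotient.ind
    rename_i a
    exact ⟨Quotient.mk _ a, rfl⟩
  have hcard1 : Nat.card (Quotient Rs) ≤ cc σ :=
    Nat.card_le_card_of_surjective _ hsurj
  -- injection from Quotient (setoid ρ) into Quotient Rs ⊕ Unit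
  have hresp : ∀ a b : α, ρ.SameCycle a b →
      (if ρ.SameCycle y a then (Sum.inr () : Quotient Rs ⊕ Unit)
        else Sum.inl (Quotient.mk Rs a)) =
      (if ρ.SameCycle y b then (Sum.inr () : Quotient Rs ⊕ Unit)
        else Sum.inl (Quotient.mk Rs b)) := by
    intro a b hab
    by_cases hya : ρ.SameCycle y a
    · rw [if_pos hya, if_pos (hya.trans hab)]
    · have hyb : ¬ ρ.SameCycle y b := fun h => hya (h.trans hab.symm)
      rw [if_neg hya, if_neg hyb]
      exact congrArg Sum.inl (Quotient.sound (Or.inl hab))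
  set ψ : Quotient (Equiv.Perm.SameCycle.setoid ρ) → Quotient Rs ⊕ Unit :=
    Quotient.lift _ hresp with hψ
  have hinj : Function.Injective ψ := by
    intro q1 q2
    induction q1 using Quotient.ind
    induction q2 using Quotient.ind
    rename_i a b
    intro h
    change (if ρ.SameCycle y a then (Sum.inr () : Quotient Rs ⊕ Unit)
        else Sum.inl (Quotient.mk Rs a)) =
      (if ρ.SameCycle y b then (Sum.inr () : Quotient Rs ⊕ Unit)
        else Sum.inl (Quotient.mk Rs b)) at h
    apply Quotient.sound
    show ρ.SameCycle a b
    by_cases hya : ρ.SameCycle y a <;> by_cases hyb : ρ.SameCycle y b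
    · exact hya.symm.trans hyb
    · rw [if_pos hya, if_neg hyb] at h
      exact absurd h (by simp)
    · rw [if_neg hya, if_pos hyb] at h
      exact absurd h (by simp)
    · rw [if_neg hya, if_neg hyb] at h
      have hR : R a b := Quotient.exact (Sum.inl.inj h)
      rcases hR with h | ⟨h1, h2⟩ | ⟨h1, h2⟩
      · exact h
      · exact absurd h2 hyb
      · exact absurd h1.symm hya
  have hcard2 : cc ρ ≤ Nat.card (Quotient Rs ⊕ Unit) :=
    Nat.card_le_card_of_injective ψ hinj
  have hcard3 : Nat.card (Quotient Rs ⊕ Unit) = Nat.card (Quotient Rs) + 1 := by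
    rw [Nat.card_sum]; simp
  omega

lemma cc_list_prod_mul_le (l : List (Perm α)) (hl : ∀ s ∈ l, s.IsSwap) (σ : Perm α) :
    cc (l.prod * σ) ≤ cc σ + l.length := by
  induction l generalizing σ with
  | nil => simp
  | cons s l ih =>
    obtain ⟨x, y, hxy, rfl⟩ := hl s List.mem_cons_self
    rw [List.prod_cons, mul_assoc]
    have h1 := cc_swap_mul_le (l.prod * σ) hxy
    have h2 := ih (fun t ht => hl t (List.mem_cons_of_mem _ ht)) σ
    simp only [List.length_cons]
    omega

lemma isCycle_swap_list : ∀ (n : ℕ) (σ : Perm α), σ.IsCycle → σ.support.card = n →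
    ∃ l : List (Perm α), (∀ s ∈ l, s.IsSwap) ∧ l.prod = σ ∧ l.length + 1 = σ.support.card := by
  intro n
  induction n using Nat.strong_induction_on with
  | _ n ih =>
    intro σ hσ hn
    obtain ⟨x, hx, -⟩ := id hσ
    by_cases h2 : σ (σ x) = x
    · have hswap : σ = Equiv.swap x (σ x) := hσ.eq_swap_of_apply_apply_eq_self hx h2
      refine ⟨[σ], ?_, List.prod_singleton, ?_⟩
      · intro s hs
        rw [List.mem_singleton] at hs
        rw [hs]
        exact ⟨x, σ x, Ne.symm hx, hswap⟩
      · rw [hswap, card_support_swap (Ne.symm hx)]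
        rfl
    · set σ' : Perm α := Equiv.swap x (σ x) * σ with hσ'
      have hc' : σ'.IsCycle := hσ.swap_mul hx h2
      have hsupp : σ'.support = σ.support \ {x} := support_swap_mul_eq σ x h2
      have hlt : σ'.support.card < n := hn ▸ card_support_swap_mul hx
      obtain ⟨l, hl, hprod, hlen⟩ := ih _ hlt σ' hc' rfl
      refine ⟨Equiv.swap x (σ x) :: l, ?_, ?_, ?_⟩
      · intro s hs
        rcases List.mem_cons.mp hs with h | h
        · exact h ▸ ⟨x, σ x, Ne.symm hx, rfl⟩
        · exact hl s h
      · rw [List.prod_cons, hprod, hσ', Equiv.swap_mul_self_mul]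
      · have hxmem : x ∈ σ.support := mem_support.mpr hx
        have hcard : σ'.support.card = σ.support.card - 1 := by
          rw [hsupp, Finset.sdiff_singleton_eq_erase, Finset.card_erase_of_mem hxmem]
        have h2le : 2 ≤ σ.support.card := hσ.two_le_card_support
        simp only [List.length_cons]
        omega

lemma exists_swap_list (σ : Perm α) :
    ∃ l : List (Perm α), (∀ s ∈ l, s.IsSwap) ∧ l.prod = σ ∧
      l.length + cc σ = Fintype.card α := by
  induction σ using Equiv.Perm.cycle_induction_on with
  | base_one => exact ⟨[], by simp, by simp, by simp [cc_one]⟩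
  | base_cycles σ hσ =>
    obtain ⟨l, h1, h2, h3⟩ := isCycle_swap_list σ.support.card σ hσ rfl
    refine ⟨l, h1, h2, ?_⟩
    have hcc := cc_eq σ
    rw [hσ.cycleFactorsFinset_eq_singleton, Finset.card_singleton] at hcc
    have hle := Finset.card_le_univ σ.support
    omega
  | induction_disjoint σ τ hd hc ih1 ih2 =>
    obtain ⟨l1, ha1, hp1, hn1⟩ := ih1
    obtain ⟨l2, ha2, hp2, hn2⟩ := ih2
    refine ⟨l1 ++ l2, ?_, by rw [List.prod_append, hp1, hp2], ?_⟩
    · intro s hs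
      rcases List.mem_append.mp hs with h | h
      exacts [ha1 s h, ha2 s h]
    · have e1 := cc_eq σ
      have e2 := cc_eq τ
      have e3 := cc_eq (σ * τ)
      have hf : (σ * τ).cycleFactorsFinset.card =
          σ.cycleFactorsFinset.card + τ.cycleFactorsFinset.card := by
        rw [hd.cycleFactorsFinset_mul_eq_union,
          Finset.card_union_of_disjoint hd.disjoint_cycleFactorsFinset]
      have hs : (σ * τ).support.card = σ.support.card + τ.support.card :=
        hd.card_support_mul
      have b1 := Finset.card_le_univ σ.support
      have b2 := Finset.card_le_univ τ.support
      have b3 := Finset.card_le_univ (σ * τ).support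
      simp only [List.length_append]
      omega

lemma cc_add_cc_le (a b : Perm α) :
    cc a + cc b ≤ Fintype.card α + cc (a⁻¹ * b) := by
  obtain ⟨l, hl, hp, hlen⟩ := exists_swap_list a
  have h := cc_list_prod_mul_le l hl (a⁻¹ * b)
  rw [hp, mul_inv_cancel_left] at h
  omega

lemma cc_finRotate_inv_le (p : ℕ) : cc ((finRotate p)⁻¹) ≤ 1 := by
  match p with
  | 0 =>
    rw [Subsingleton.elim ((finRotate 0)⁻¹) 1, cc_one]
    simp
  | 1 =>
    rw [Subsingleton.elim ((finRotate 1)⁻¹) 1, cc_one]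
    simp
  | (n + 2) =>
    have hc : IsCycle ((finRotate (n + 2))⁻¹) := isCycle_finRotate.inv
    rw [cc_eq, hc.cycleFactorsFinset_eq_singleton, Finset.card_singleton,
      support_inv, support_finRotate]
    simp

end BianeAux

/-- The number of cycles of a permutation (fixed points counted as cycles),
i.e. the number of orbits. -/
noncomputable def cycleCount {p : ℕ} (σ : Equiv.Perm (Fin p)) : ℕ :=
  Nat.card (Quotient (Equiv.Perm.SameCycle.setoid σ))

/-- Biane's inequality: `|σ| + |σγ⁻¹| ≤ p + 1` for the full cycle `γ`. -/
theorem cycleCount_add_cycleCount_mul_inv_fullCycle_le (p : ℕ) (σ : Equiv.Perm (Fin p)) :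
    cycleCount σ + cycleCount (σ * (finRotate p)⁻¹) ≤ p + 1 := by
  have h := BianeAux.cc_add_cc_le σ (σ * (finRotate p)⁻¹)
  rw [inv_mul_cancel_left, Fintype.card_fin] at h
  have hγ := BianeAux.cc_finRotate_inv_le p
  have e1 : cycleCount σ = BianeAux.cc σ := rfl
  have e2 : cycleCount (σ * (finRotate p)⁻¹) = BianeAux.cc (σ * (finRotate p)⁻¹) := rfl
  omega
end

section
/- For any noncrossing partition σ ∈ NC_p, viewed as a permutation by cycling inside each block, one has |σγ⁻¹| = p + 1 - |σ|, where γ is the full cycle; i.e., equality in Biane's inequality |σ|+|σγ⁻¹| ≤ p+1 holds for noncrossing permutations. -/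
/-- A permutation of `{0,...,p-1}` arises from a noncrossing partition by cycling
inside each block (sending each element of a block to the next larger one, and the
largest back to the smallest), with the blocks (= cycles) forming a noncrossing
partition. -/
def IsNoncrossingPerm {p : ℕ} (σ : Equiv.Perm (Fin p)) : Prop :=
  (∀ x y : Fin p, σ.SameCycle x y →
      (x < σ x → ¬(x < y ∧ y < σ x)) ∧ (σ x ≤ x → σ x ≤ y ∧ y ≤ x)) ∧
  (∀ a b c d : Fin p, a < b → b < c → c < d →
      σ.SameCycle a c → σ.SameCycle b d → σ.SameCycle a b)

open Equiv Equiv.Perm Finset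

/-- Generic counting principle: if every cycle of `σ` contains exactly one
element satisfying `P`, then the number of cycles is the number of elements
satisfying `P`. -/
lemma cycleCount_eq_card_filter {p : ℕ} (σ : Equiv.Perm (Fin p))
    (P : Fin p → Prop) [DecidablePred P]
    (hex : ∀ z : Fin p, ∃ x, σ.SameCycle z x ∧ P x)
    (huniq : ∀ x y, σ.SameCycle x y → P x → P y → x = y) :
    cycleCount σ = (Finset.univ.filter P).card := by
  classical
  have e : {x : Fin p // P x} ≃ Quotient (Equiv.Perm.SameCycle.setoid σ) := by
    refine Equiv.ofBijective
      (fun x => @Quotient.mk _ (Equiv.Perm.SameCycle.setoid σ) x.1) ⟨?_, ?_⟩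
    · intro a b h
      exact Subtype.ext (huniq _ _ (Quotient.exact h) a.2 b.2)
    · intro q
      induction q using Quotient.inductionOn with
      | h z =>
        obtain ⟨x, hx, hP⟩ := hex z
        exact ⟨⟨x, hP⟩, Quotient.sound hx.symm⟩
  rw [cycleCount, ← Nat.card_congr e, Nat.card_eq_fintype_card,
    Fintype.card_subtype]

/-- Every cycle contains an element `x` with `σ x ≤ x` (its maximum). -/
lemma exists_descent {p : ℕ} (σ : Equiv.Perm (Fin p)) (z : Fin p) :
    ∃ x, σ.SameCycle z x ∧ σ x ≤ x := by
  classical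
  set S : Finset (Fin p) := Finset.univ.filter (σ.SameCycle z) with hS
  have hzS : z ∈ S := by
    simp only [hS, Finset.mem_filter, Finset.mem_univ, true_and]
    exact Equiv.Perm.SameCycle.refl σ z
  have hne : S.Nonempty := ⟨z, hzS⟩
  have hmem := S.max'_mem hne
  have hsc : σ.SameCycle z (S.max' hne) := by
    simpa [hS] using hmem
  refine ⟨S.max' hne, hsc, ?_⟩
  apply S.le_max'
  have : σ.SameCycle z (σ (S.max' hne)) := hsc.trans ⟨1, by simp⟩
  simpa [hS] using this

/-- Every cycle contains an element `x` with `x ≤ σ x` (its minimum). -/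
lemma exists_ascent {p : ℕ} (σ : Equiv.Perm (Fin p)) (z : Fin p) :
    ∃ x, σ.SameCycle z x ∧ x ≤ σ x := by
  classical
  set S : Finset (Fin p) := Finset.univ.filter (σ.SameCycle z) with hS
  have hzS : z ∈ S := by
    simp only [hS, Finset.mem_filter, Finset.mem_univ, true_and]
    exact Equiv.Perm.SameCycle.refl σ z
  have hne : S.Nonempty := ⟨z, hzS⟩
  have hmem := S.min'_mem hne
  have hsc : σ.SameCycle z (S.min' hne) := by
    simpa [hS] using hmem
  refine ⟨S.min' hne, hsc, ?_⟩
  apply S.min'_le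
  have : σ.SameCycle z (σ (S.min' hne)) := hsc.trans ⟨1, by simp⟩
  simpa [hS] using this

/-- For a noncrossing permutation, each cycle has a unique weak descent. -/
lemma uniq_descent {p : ℕ} {σ : Equiv.Perm (Fin p)} (hσ : IsNoncrossingPerm σ)
    (x y : Fin p) (h : σ.SameCycle x y) (hx : σ x ≤ x) (hy : σ y ≤ y) :
    x = y :=
  le_antisymm ((hσ.1 y x h.symm).2 hy).2 ((hσ.1 x y h).2 hx).2

section Rot

variable {n : ℕ}

lemma rot_inv_apply (z : Fin (n + 1)) : (finRotate (n + 1))⁻¹ z = z - 1 := by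
  have : finRotate (n + 1) (z - 1) = z := by
    rw [finRotate_succ_apply, sub_add_cancel]
  exact (Equiv.Perm.inv_eq_iff_eq).2 this.symm

lemma rho_apply (σ : Equiv.Perm (Fin (n + 1))) (z : Fin (n + 1)) :
    (σ * (finRotate (n + 1))⁻¹) z = σ (z - 1) := by
  rw [Equiv.Perm.mul_apply, rot_inv_apply]

lemma fin_sub_one_val {z : Fin (n + 1)} (hz : z ≠ 0) :
    (z - 1).val = z.val - 1 := by
  rw [Fin.coe_sub_one, if_neg hz]

/-- Invariance of the interval `(v, σ v]` under `ρ = σ γ⁻¹`. -/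
lemma step_lemma {σ : Equiv.Perm (Fin (n + 1))} (hσ : IsNoncrossingPerm σ)
    (v : Fin (n + 1)) (hv : v < σ v) (z : Fin (n + 1))
    (h1 : v < z) (h2 : z ≤ σ v) :
    v < (σ * (finRotate (n + 1))⁻¹) z ∧ (σ * (finRotate (n + 1))⁻¹) z ≤ σ v := by
  rw [rho_apply]
  have hz0 : z ≠ 0 := by
    intro hz; rw [hz] at h1; exact absurd h1 (by simp [Fin.lt_def])
  set w := z - 1 with hw
  have hwval : w.val = z.val - 1 := fin_sub_one_val hz0
  have hvw : v ≤ w := by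
    rw [Fin.le_def, hwval]; have := Fin.lt_def.1 h1; omega
  rcases eq_or_lt_of_le hvw with hvw' | hvw'
  · rw [← hvw']; exact ⟨hv, le_rfl⟩
  · -- v < w < σ v
    have hwsv : w < σ v := by
      rw [Fin.lt_def, hwval]
      have := Fin.le_def.1 h2; have := Fin.lt_def.1 h1; omega
    have hnsc : ¬ σ.SameCycle v w := fun hs =>
      (hσ.1 v w hs).1 hv ⟨hvw', hwsv⟩
    have hscv : σ.SameCycle v (σ v) := ⟨1, by simp⟩
    have hscw : σ.SameCycle w (σ w) := ⟨1, by simp⟩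
    constructor
    · -- v < σ w
      rcases lt_trichotomy (σ w) v with hlt | heq | hgt
      · exfalso
        have h1 : σ.SameCycle (σ w) v :=
          hσ.2 (σ w) v w (σ v) hlt hvw' hwsv hscw.symm hscv
        exact hnsc (h1.symm.trans hscw.symm)
      · exact absurd (heq ▸ hscw.symm) hnsc
      · exact hgt
    · -- σ w ≤ σ v
      by_contra hgt
      push_neg at hgt
      exact hnsc (hσ.2 v w (σ v) (σ w) hvw' hwsv hgt hscv hscw)

lemma orbit_lemma {σ : Equiv.Perm (Fin (n + 1))} (hσ : IsNoncrossingPerm σ)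
    (v : Fin (n + 1)) (hv : v < σ v) :
    ∀ (m : ℕ) (z : Fin (n + 1)), v < z → z ≤ σ v →
      v < ((σ * (finRotate (n + 1))⁻¹) ^ m) z ∧
        ((σ * (finRotate (n + 1))⁻¹) ^ m) z ≤ σ v := by
  intro m
  induction m with
  | zero => intro z h1 h2; simpa using ⟨h1, h2⟩
  | succ m ih =>
    intro z h1 h2
    have hstep := step_lemma hσ v hv z h1 h2
    have := ih _ hstep.1 hstep.2
    rw [pow_succ, Equiv.Perm.mul_apply]
    exact this

/-- For noncrossing `σ`, each cycle of `ρ = σ γ⁻¹` has a unique weak ascent. -/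
lemma uniq_ascent {σ : Equiv.Perm (Fin (n + 1))} (hσ : IsNoncrossingPerm σ)
    (x y : Fin (n + 1)) (h : (σ * (finRotate (n + 1))⁻¹).SameCycle x y)
    (hx : x ≤ (σ * (finRotate (n + 1))⁻¹) x)
    (hy : y ≤ (σ * (finRotate (n + 1))⁻¹) y) : x = y := by
  set ρ := σ * (finRotate (n + 1))⁻¹ with hρ
  have key : ∀ a b : Fin (n + 1), a < b → ρ.SameCycle b a →
      b ≤ ρ b → False := by
    intro a b hab hsc hb
    have hb0 : b ≠ 0 := by
      intro h0; rw [h0] at hab; exact absurd hab (by simp [Fin.lt_def])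
    set v := b - 1 with hv
    have hvval : v.val = b.val - 1 := fin_sub_one_val hb0
    have hvb : v < b := by rw [Fin.lt_def, hvval]; have : b.val ≠ 0 := by
                             exact fun h => hb0 (Fin.ext (by simp [h]))
                           omega
    have hbσv : b ≤ σ v := by rw [hρ, rho_apply] at hb; exact hb
    have hvσv : v < σ v := lt_of_lt_of_le hvb hbσv
    obtain ⟨i, _, hi⟩ := hsc.exists_pow_eq'
    have := (orbit_lemma hσ v hvσv i b hvb hbσv).1
    rw [hi] at this
    -- v < a but a < b = v + 1
    rw [Fin.lt_def, hvval] at this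
    have h1 := Fin.lt_def.1 hab
    omega
  rcases lt_trichotomy x y with hlt | heq | hgt
  · exact absurd (key x y hlt h.symm hy) (fun f => f.elim)
  · exact heq
  · exact absurd (key y x hgt h hx) (fun f => f.elim)

lemma count_lemma (σ : Equiv.Perm (Fin (n + 1))) :
    (Finset.univ.filter (fun x => σ x ≤ x)).card +
      (Finset.univ.filter (fun x => x ≤ (σ * (finRotate (n + 1))⁻¹) x)).card
      = (n + 1) + 1 := by
  classical
  have hUeq : Finset.univ.filter (fun x => x ≤ (σ * (finRotate (n + 1))⁻¹) x)
      = insert (0 : Fin (n + 1))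
        ((Finset.univ.filter (fun x => ¬ σ x ≤ x)).image (· + 1)) := by
    ext t
    simp only [Finset.mem_filter, Finset.mem_univ, true_and, Finset.mem_insert,
      Finset.mem_image, rho_apply]
    constructor
    · intro ht
      by_cases ht0 : t = 0
      · exact Or.inl ht0
      · refine Or.inr ⟨t - 1, ?_, sub_add_cancel t 1⟩
        intro hle
        have h1 : (t - 1).val = t.val - 1 := fin_sub_one_val ht0
        have h2 := Fin.le_def.1 ht
        have h3 := Fin.le_def.1 hle
        have ht0' : t.val ≠ 0 := fun h => ht0 (Fin.ext (by simp [h]))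
        omega
    · rintro (rfl | ⟨s, hs, rfl⟩)
      · exact Fin.zero_le _
      · -- s < σ s, show s + 1 ≤ σ ((s + 1) - 1) = σ s
        rw [add_sub_cancel_right]
        have hlt : s < σ s := lt_of_not_ge hs
        have hsn : s.val < n := by
          by_contra hsn
          push_neg at hsn
          have : s.val = n := le_antisymm (Nat.lt_succ_iff.1 s.isLt) hsn
          have := Fin.lt_def.1 hlt
          have := Nat.lt_succ_iff.1 (σ s).isLt
          omega
        rw [Fin.le_def]
        have hval : ((s + 1 : Fin (n + 1))).val = s.val + 1 :=
          Fin.val_add_one_of_lt (by rw [Fin.lt_def, Fin.val_last]; exact hsn)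
        rw [hval]
        exact Fin.lt_def.1 hlt
  have h0notmem : (0 : Fin (n + 1)) ∉
      (Finset.univ.filter (fun x => ¬ σ x ≤ x)).image (· + 1) := by
    simp only [Finset.mem_image, Finset.mem_filter, Finset.mem_univ, true_and]
    rintro ⟨s, hs, hs0⟩
    have hslast : s = Fin.last n := by
      by_contra hne
      have h1 := Fin.val_add_one s
      rw [if_neg hne, hs0] at h1
      simp at h1
    have hsval : s.val = n := by rw [hslast, Fin.val_last]
    apply hs
    rw [Fin.le_def]
    have := Nat.lt_succ_iff.1 (σ s).isLt
    omega
  have hinj : Function.Injective (· + 1 : Fin (n + 1) → Fin (n + 1)) :=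
    add_left_injective 1
  rw [hUeq, Finset.card_insert_of_notMem h0notmem,
    Finset.card_image_of_injective _ hinj]
  have := Finset.card_filter_add_card_filter_not
    (s := (Finset.univ : Finset (Fin (n + 1)))) (p := fun x => σ x ≤ x)
  simp only [Finset.card_univ, Fintype.card_fin] at this
  omega

end Rot

/-- Equality in Biane's inequality for noncrossing permutations:
`|σ| + |σγ⁻¹| = p + 1`, i.e. `|σγ⁻¹| = p + 1 - |σ|`. -/
theorem cycleCount_mul_inv_fullCycle_of_noncrossing (p : ℕ) (hp : 0 < p)
    (σ : Equiv.Perm (Fin p)) (hσ : IsNoncrossingPerm σ) :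
    cycleCount σ + cycleCount (σ * (finRotate p)⁻¹) = p + 1 := by
  classical
  obtain ⟨n, rfl⟩ := Nat.exists_eq_succ_of_ne_zero hp.ne'
  rw [cycleCount_eq_card_filter σ (fun x => σ x ≤ x)
      (exists_descent σ) (uniq_descent hσ),
    cycleCount_eq_card_filter (σ * (finRotate (n + 1))⁻¹)
      (fun x => x ≤ (σ * (finRotate (n + 1))⁻¹) x)
      (exists_ascent _) (uniq_ascent hσ)]
  exact count_lemma σ
end

section
/- The function φ(σ,τ) = |στ⁻¹| - |τ| on pairs of noncrossing permutations is multiplicative in the sense that φ(σ,γ) = φ(σ,σ) for all σ ∈ NC_p; that is, |σγ⁻¹| - 1 = p - |σ| = |σσ⁻¹| - |σ|. -/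
open Equiv Equiv.Perm

section Machinery

variable {α : Type*} [Fintype α] [DecidableEq α]

/-- The join of the `SameCycle f` relation with the extra identification `a ~ b`. -/
def Jrel (f : Perm α) (a b x y : α) : Prop :=
  f.SameCycle x y ∨ (f.SameCycle x a ∧ f.SameCycle b y) ∨ (f.SameCycle x b ∧ f.SameCycle a y)

theorem Jrel.equivalence (f : Perm α) (a b : α) : Equivalence (Jrel f a b) where
  refl x := Or.inl (SameCycle.refl f x)
  symm := by
    rintro x y (h | ⟨h1, h2⟩ | ⟨h1, h2⟩)
    · exact Or.inl h.symm
    · exact Or.inr (Or.inr ⟨h2.symm, h1.symm⟩)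
    · exact Or.inr (Or.inl ⟨h2.symm, h1.symm⟩)
  trans := by
    rintro x y z (h | ⟨h1, h2⟩ | ⟨h1, h2⟩) (g | ⟨g1, g2⟩ | ⟨g1, g2⟩)
    · exact Or.inl (h.trans g)
    · exact Or.inr (Or.inl ⟨h.trans g1, g2⟩)
    · exact Or.inr (Or.inr ⟨h.trans g1, g2⟩)
    · exact Or.inr (Or.inl ⟨h1, h2.trans g⟩)
    · exact Or.inr (Or.inl ⟨h1, g2⟩)
    · exact Or.inl (h1.trans g2)
    · exact Or.inr (Or.inr ⟨h1, h2.trans g⟩)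
    · exact Or.inl (h1.trans g2)
    · exact Or.inr (Or.inr ⟨h1, g2⟩)

/-- `Jrel` as a setoid. -/
def Jsetoid (f : Perm α) (a b : α) : Setoid α := ⟨Jrel f a b, Jrel.equivalence f a b⟩

theorem jrel_mul_apply (f : Perm α) (a b x : α) : Jrel f a b x ((swap a b * f) x) := by
  have hx : f.SameCycle x (f x) := ⟨1, by simp⟩
  rw [Equiv.Perm.mul_apply]
  rcases eq_or_ne (f x) a with h | h
  · rw [h, swap_apply_left]
    exact Or.inr (Or.inl ⟨h ▸ hx, SameCycle.refl f b⟩)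
  rcases eq_or_ne (f x) b with h' | h'
  · rw [h', swap_apply_right]
    exact Or.inr (Or.inr ⟨h' ▸ hx, SameCycle.refl f a⟩)
  · rw [swap_apply_of_ne_of_ne h h']
    exact Or.inl hx

theorem sameCycle_swap_mul_subset (f : Perm α) (a b x y : α)
    (h : (swap a b * f).SameCycle x y) : Jrel f a b x y := by
  obtain ⟨i, -, rfl⟩ := h.exists_pow_eq'
  clear h
  induction i with
  | zero => exact (Jrel.equivalence f a b).refl x
  | succ n ih =>
    rw [pow_succ', Equiv.Perm.mul_apply]
    exact (Jrel.equivalence f a b).trans ih (jrel_mul_apply f a b _)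

theorem jrel_swap_mul_le (f : Perm α) (a b : α) :
    ∀ x y, Jrel (swap a b * f) a b x y → Jrel f a b x y := by
  have key := sameCycle_swap_mul_subset f a b
  have jab : Jrel f a b a b := Or.inr (Or.inl ⟨SameCycle.refl f a, SameCycle.refl f b⟩)
  have jba : Jrel f a b b a := (Jrel.equivalence f a b).symm jab
  rintro x y (h | ⟨h1, h2⟩ | ⟨h1, h2⟩)
  · exact key _ _ h
  · exact (Jrel.equivalence f a b).trans
      ((Jrel.equivalence f a b).trans (key _ _ h1) jab) (key _ _ h2)
  · exact (Jrel.equivalence f a b).trans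
      ((Jrel.equivalence f a b).trans (key _ _ h1) jba) (key _ _ h2)

theorem jsetoid_swap_mul (f : Perm α) (a b : α) :
    Jsetoid (swap a b * f) a b = Jsetoid f a b := by
  refine Setoid.ext fun x y => ⟨jrel_swap_mul_le f a b x y, fun h => ?_⟩
  have := jrel_swap_mul_le (swap a b * f) a b x y
  rw [← mul_assoc, swap_mul_self, one_mul] at this
  exact this h

theorem jsetoid_eq_of_sameCycle (f : Perm α) {a b : α} (h : f.SameCycle a b) :
    Jsetoid f a b = Equiv.Perm.SameCycle.setoid f := by
  refine Setoid.ext fun x y => ⟨?_, fun hxy => Or.inl hxy⟩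
  rintro (h1 | ⟨h1, h2⟩ | ⟨h1, h2⟩)
  · exact h1
  · exact h1.trans (h.trans h2)
  · exact h1.trans (h.symm.trans h2)

theorem swap_mul_pow_eq (f : Perm α) (a b x : α) :
    ∀ n : ℕ, 0 < n → (∀ i, 0 < i → i < n → (f ^ i) x ≠ a ∧ (f ^ i) x ≠ b) →
      ((swap a b * f) ^ n) x = swap a b ((f ^ n) x) := by
  intro n
  induction n with
  | zero => omega
  | succ n ih =>
    intro _ h
    rcases Nat.eq_zero_or_pos n with rfl | hn
    · rw [pow_one, pow_one, Equiv.Perm.mul_apply]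
    · have e1 : ((swap a b * f) ^ (n + 1)) x = (swap a b * f) (((swap a b * f) ^ n) x) := by
        rw [pow_succ', Equiv.Perm.mul_apply]
      have e2 : (f ^ (n + 1)) x = f ((f ^ n) x) := by
        rw [pow_succ', Equiv.Perm.mul_apply]
      rw [e1, ih hn (fun i hi hin => h i hi (by omega)), e2, Equiv.Perm.mul_apply,
        swap_apply_of_ne_of_ne (h n hn (by omega)).1 (h n hn (by omega)).2]

theorem zpow_eq_pow_mod (g : Perm α) (x : α) (k : ℕ) (hk : 0 < k)
    (hfix : (g ^ k) x = x) (i : ℤ) : ∃ j : ℕ, j < k ∧ (g ^ i) x = (g ^ j) x := by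
  have h1 : 0 ≤ i % (k : ℤ) := Int.emod_nonneg i (by exact_mod_cast hk.ne')
  have h2 : i % (k : ℤ) < k := Int.emod_lt_of_pos i (by exact_mod_cast hk)
  refine ⟨(i % (k : ℤ)).toNat, by omega, ?_⟩
  have hfix' : (g ^ (k : ℤ)) x = x := by rw [zpow_natCast]; exact hfix
  have hq : (g ^ ((k : ℤ) * (i / (k : ℤ)))) x = x := by
    rw [zpow_mul]
    exact Equiv.Perm.zpow_apply_eq_self_of_apply_eq_self hfix' _
  have : (g ^ i) x = (g ^ (i % (k : ℤ))) x := by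
    conv_lhs => rw [← Int.emod_add_mul_ediv i (k : ℤ)]
    rw [zpow_add, Equiv.Perm.mul_apply, hq]
  rw [this, ← zpow_natCast, Int.toNat_of_nonneg h1]

theorem not_sameCycle_swap_mul (f : Perm α) {a b : α} (hab : a ≠ b)
    (h : f.SameCycle a b) : ¬ (swap a b * f).SameCycle a b := by
  classical
  obtain ⟨i, -, hi⟩ := h.exists_pow_eq'
  have hi0 : 0 < i := by
    rcases Nat.eq_zero_or_pos i with rfl | h'
    · simp at hi; exact absurd hi hab
    · exact h'
  have hP : ∃ k, 0 < k ∧ (f ^ k) a = b := ⟨i, hi0, hi⟩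
  obtain ⟨hk0, hkb⟩ := Nat.find_spec hP
  set k := Nat.find hP with hkdef
  have hmin : ∀ j, 0 < j → j < k → (f ^ j) a ≠ b := fun j h0 hj hb =>
    Nat.find_min hP hj ⟨h0, hb⟩
  have hne : ∀ j, 0 < j → j < k → (f ^ j) a ≠ a ∧ (f ^ j) a ≠ b := by
    intro j h0 hj
    refine ⟨fun haj => ?_, hmin j h0 hj⟩
    have hkj : (f ^ (k - j)) a = b := by
      have h2 : (f ^ (k - j)) ((f ^ j) a) = b := by
        rw [← Equiv.Perm.mul_apply, ← pow_add, Nat.sub_add_cancel hj.le]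
        exact hkb
      rwa [haj] at h2
    have hj0 : 0 < k - j := by
      rcases Nat.eq_zero_or_pos (k - j) with h' | h'
      · rw [h'] at hkj; simp at hkj; exact absurd hkj hab
      · exact h'
    exact hmin (k - j) hj0 (by omega) hkj
  have hga : ((swap a b * f) ^ k) a = a := by
    rw [swap_mul_pow_eq f a b a k hk0 hne, hkb, swap_apply_right]
  rintro ⟨i', hib⟩
  obtain ⟨j, hjk, hj⟩ := zpow_eq_pow_mod (swap a b * f) a k hk0 hga i'
  rw [hj] at hib
  rcases Nat.eq_zero_or_pos j with rfl | hj0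
  · simp at hib; exact hab hib
  · rw [swap_mul_pow_eq f a b a j hj0 (fun i2 h0 hij => hne i2 h0 (lt_trans hij hjk))] at hib
    have h2 := hne j hj0 hjk
    rw [swap_apply_of_ne_of_ne h2.1 h2.2] at hib
    exact h2.2 hib

theorem sameCycle_swap_mul_of_not (f : Perm α) {a b : α} (hab : a ≠ b)
    (h : ¬ f.SameCycle a b) : (swap a b * f).SameCycle a b := by
  classical
  have hP : ∃ k, 0 < k ∧ (f ^ k) a = a :=
    ⟨orderOf f, orderOf_pos f, by rw [pow_orderOf_eq_one]; rfl⟩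
  obtain ⟨hk0, hka⟩ := Nat.find_spec hP
  set k := Nat.find hP with hkdef
  have hne : ∀ j, 0 < j → j < k → (f ^ j) a ≠ a ∧ (f ^ j) a ≠ b := fun j h0 hj =>
    ⟨fun ha => Nat.find_min hP hj ⟨h0, ha⟩,
     fun hb => h ⟨(j : ℤ), by rw [zpow_natCast]; exact hb⟩⟩
  refine ⟨(k : ℤ), ?_⟩
  rw [zpow_natCast, swap_mul_pow_eq f a b a k hk0 hne, hka, swap_apply_left]

/-- The number of cycles (orbits) of a permutation. -/
noncomputable def cc (f : Perm α) : ℕ :=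
  Nat.card (Quotient (Equiv.Perm.SameCycle.setoid f))

theorem card_quot_eq (f : Perm α) {a b : α} (h : ¬ f.SameCycle a b) :
    cc f = Nat.card (Quotient (Jsetoid f a b)) + 1 := by
  classical
  have hab : a ≠ b := fun e => h (e ▸ SameCycle.refl f a)
  set g : α → Quotient (Jsetoid f a b) ⊕ Unit :=
    fun x => if f.SameCycle x b then Sum.inr () else Sum.inl (Quotient.mk (Jsetoid f a b) x)
    with hg
  have hgb : ∀ x, f.SameCycle x b → g x = Sum.inr () := by
    intro x hx; rw [hg]; simp only [if_pos hx]
  have hgn : ∀ x, ¬ f.SameCycle x b → g x = Sum.inl (Quotient.mk (Jsetoid f a b) x) := by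
    intro x hx; rw [hg]; simp only [if_neg hx]
  have hresp : ∀ x y, f.SameCycle x y → g x = g y := by
    intro x y hxy
    by_cases hx : f.SameCycle x b
    · rw [hgb x hx, hgb y (hxy.symm.trans hx)]
    · rw [hgn x hx, hgn y (fun hy => hx (hxy.trans hy))]
      exact congrArg _ (Quotient.sound (Or.inl hxy))
  set ψ : Quotient (Equiv.Perm.SameCycle.setoid f) → Quotient (Jsetoid f a b) ⊕ Unit :=
    Quotient.lift g (fun x y hxy => hresp x y hxy) with hψdef
  have hψ : ∀ x, ψ (Quotient.mk (Equiv.Perm.SameCycle.setoid f) x) = g x := fun x => rfl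
  have hinj : Function.Injective ψ := by
    intro q1 q2
    induction q1 using Quotient.inductionOn with | h x =>
    induction q2 using Quotient.inductionOn with | h y =>
    intro heq
    rw [hψ, hψ] at heq
    by_cases hx : f.SameCycle x b <;> by_cases hy : f.SameCycle y b
    · exact Quotient.sound (hx.trans hy.symm)
    · rw [hgb x hx, hgn y hy] at heq; exact absurd heq (by simp)
    · rw [hgn x hx, hgb y hy] at heq; exact absurd heq (by simp)
    · rw [hgn x hx, hgn y hy] at heq
      rcases Quotient.exact (Sum.inl.inj heq) with h1 | ⟨h1, h2⟩ | ⟨h1, h2⟩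
      · exact Quotient.sound h1
      · exact absurd h2.symm hy
      · exact absurd h1 hx
  have hsurj : Function.Surjective ψ := by
    rintro (c | ⟨⟩)
    · induction c using Quotient.inductionOn with | h y =>
      by_cases hy : f.SameCycle y b
      · refine ⟨Quotient.mk _ a, ?_⟩
        rw [hψ, hgn a h]
        exact congrArg _ (Quotient.sound (Or.inr (Or.inl ⟨SameCycle.refl f a, hy.symm⟩)))
      · exact ⟨Quotient.mk _ y, by rw [hψ, hgn y hy]⟩
    · exact ⟨Quotient.mk _ b, by rw [hψ, hgb b (SameCycle.refl f b)]⟩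
  have := Nat.card_congr (Equiv.ofBijective ψ ⟨hinj, hsurj⟩)
  rw [cc, this, Nat.card_sum]
  simp

theorem cc_swap_mul_sameCycle (f : Perm α) {a b : α} (hab : a ≠ b)
    (h : f.SameCycle a b) : cc (swap a b * f) = cc f + 1 := by
  have h1 : ¬ (swap a b * f).SameCycle a b := not_sameCycle_swap_mul f hab h
  have h2 := card_quot_eq (swap a b * f) h1
  have h3 : Jsetoid (swap a b * f) a b = Equiv.Perm.SameCycle.setoid f :=
    (jsetoid_swap_mul f a b).trans (jsetoid_eq_of_sameCycle f h)
  rw [h2, h3]; rfl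

theorem cc_swap_mul_not_sameCycle (f : Perm α) {a b : α} (hab : a ≠ b)
    (h : ¬ f.SameCycle a b) : cc (swap a b * f) + 1 = cc f := by
  have h1 : (swap a b * f).SameCycle a b := sameCycle_swap_mul_of_not f hab h
  have h2 := card_quot_eq f h
  have h3 : Jsetoid f a b = Equiv.Perm.SameCycle.setoid (swap a b * f) :=
    (jsetoid_swap_mul f a b).symm.trans (jsetoid_eq_of_sameCycle _ h1)
  rw [h2, h3]; rfl

theorem cc_eq_card (β : Type*) [Fintype β] [DecidableEq β] :
    cc (1 : Perm β) = Fintype.card β := by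
  have hinj : Function.Injective
      (Quotient.mk (Equiv.Perm.SameCycle.setoid (1 : Perm β))) := by
    intro x y h
    exact Equiv.Perm.sameCycle_one.mp (Quotient.exact h)
  have hsurj : Function.Surjective
      (Quotient.mk (Equiv.Perm.SameCycle.setoid (1 : Perm β))) := fun q =>
    Quotient.inductionOn q fun x => ⟨x, rfl⟩
  rw [cc, ← Nat.card_congr (Equiv.ofBijective _ ⟨hinj, hsurj⟩), Nat.card_eq_fintype_card]

theorem cc_eq_one_of (f : Perm α) [Nonempty α] (h : ∀ x y, f.SameCycle x y) : cc f = 1 := by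
  rw [cc, Nat.card_eq_one_iff_unique]
  constructor
  · constructor
    intro q1 q2
    induction q1 using Quotient.inductionOn with | h x =>
    induction q2 using Quotient.inductionOn with | h y =>
    exact Quotient.sound (h x y)
  · exact ⟨Quotient.mk _ (Classical.arbitrary α)⟩

end Machinery

open Fin.NatCast Fin.CommRing in
theorem sameCycle_finRotate (n : ℕ) (x y : Fin (n + 1)) :
    (finRotate (n + 1)).SameCycle x y := by
  have key : ∀ k : ℕ, ((finRotate (n + 1)) ^ k) x = x + (k : Fin (n + 1)) := by
    intro k
    induction k with
    | zero => simp
    | succ m ih =>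
      rw [pow_succ', Equiv.Perm.mul_apply, ih, finRotate_succ_apply]
      push_cast
      ring
  exact ⟨(((y - x : Fin (n + 1)) : ℕ) : ℤ), by
    rw [zpow_natCast, key, Fin.cast_val_eq_self]; ring⟩

theorem cc_finRotate (n : ℕ) : cc (finRotate (n + 1)) = 1 :=
  cc_eq_one_of _ (sameCycle_finRotate n)

theorem jrel_swap_mul_ge {α : Type*} [Fintype α] [DecidableEq α] (f : Perm α) (a b x y : α)
    (h : Jrel f a b x y) : Jrel (swap a b * f) a b x y := by
  have h2 := jrel_swap_mul_le (swap a b * f) a b x y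
  rw [← mul_assoc, swap_mul_self, one_mul] at h2
  exact h2 h

theorem fin_pred (n : ℕ) (z y : Fin (n + 1)) (h : z + 1 = y) (hy : y ≠ 0) :
    z.val + 1 = y.val := by
  have hv : (z.val + (1 : Fin (n + 1)).val) % (n + 1) = y.val := by rw [← Fin.val_add, h]
  rcases Nat.eq_zero_or_pos n with rfl | hn
  · exact absurd (Fin.ext (by omega : y.val = (0 : Fin 1).val)) hy
  · have h2 : (1 : Fin (n + 1)).val = 1 := by
      rw [Fin.val_one', Nat.mod_eq_of_lt (by omega)]
    rw [h2] at hv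
    have hz : z.val < n + 1 := z.isLt
    have hyv : y.val ≠ 0 := fun h' => hy (Fin.ext (by simpa using h'))
    rcases Nat.lt_or_ge (z.val + 1) (n + 1) with hlt | hge
    · rwa [Nat.mod_eq_of_lt hlt] at hv
    · have h3 : z.val + 1 = n + 1 := by omega
      rw [h3, Nat.mod_self] at hv
      exact absurd hv.symm hyv

theorem key_one (n : ℕ) :
    cc ((1 : Perm (Fin (n + 1))) * (finRotate (n + 1))⁻¹) + cc (1 : Perm (Fin (n + 1)))
      = n + 2 := by
  rw [one_mul, cc_eq_card, Fintype.card_fin]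
  have h2 : cc ((finRotate (n + 1))⁻¹) = 1 :=
    cc_eq_one_of _ (fun x y => Equiv.Perm.sameCycle_inv.mpr (sameCycle_finRotate n x y))
  rw [h2]
  omega

theorem key_lemma (n : ℕ) : ∀ N : ℕ, ∀ σ : Equiv.Perm (Fin (n + 1)), σ.support.card ≤ N →
    IsNoncrossingPerm σ → cc (σ * (finRotate (n + 1))⁻¹) + cc σ = n + 2 := by
  intro N
  induction N with
  | zero =>
    intro σ hcard hnc
    have h1 : σ = 1 := Equiv.Perm.card_support_eq_zero.mp (Nat.le_zero.mp hcard)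
    subst h1
    exact key_one n
  | succ N ih =>
    intro σ hcard hnc
    by_cases h1 : σ = 1
    · subst h1; exact key_one n
    · have hne : σ.support.Nonempty :=
        Finset.card_pos.mp (Nat.pos_of_ne_zero
          (fun h0 => h1 (Equiv.Perm.card_support_eq_zero.mp h0)))
      set x := σ.support.max' hne with hxdef
      have hx_mem : x ∈ σ.support := σ.support.max'_mem hne
      have hmax : ∀ y ∈ σ.support, y ≤ x := fun y hy => Finset.le_max' _ y hy
      obtain ⟨m, hm⟩ : ∃ m, σ x = m := ⟨σ x, rfl⟩
      have hm_mem : m ∈ σ.support := hm ▸ Equiv.Perm.apply_mem_support.mpr hx_mem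
      have hmne : m ≠ x := hm ▸ Equiv.Perm.mem_support.mp hx_mem
      have hmlt : m < x := lt_of_le_of_ne (hmax m hm_mem) hmne
      have hSame : σ.SameCycle x m := ⟨1, by rw [zpow_one, hm]⟩
      have hcyc : ∀ y, σ.SameCycle x y → m ≤ y ∧ y ≤ x := by
        intro y hy
        have h2 := (hnc.1 x y hy).2 (by rw [hm]; exact hmlt.le)
        rw [hm] at h2
        exact h2
      have hge : ∀ z : Fin (n + 1), m ≤ z → z < x → m < σ z ∧ σ z ≤ x := by
        intro z hz1 hz2
        constructor
        · rcases eq_or_lt_of_le hz1 with rfl | hz1'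
          · have hsm : σ.SameCycle x (σ m) := hSame.trans ⟨1, by rw [zpow_one]⟩
            have h3 := (hcyc (σ m) hsm).1
            have h4 : σ m ≠ m := Equiv.Perm.mem_support.mp hm_mem
            exact lt_of_le_of_ne h3 (Ne.symm h4)
          · by_contra hcon
            push_neg at hcon
            have h5 : σ z ≠ m := by
              intro he
              exact absurd (σ.injective (by rw [he, hm])) (ne_of_lt hz2)
            have h6 : σ z < m := lt_of_le_of_ne hcon h5
            have h7' : σ.SameCycle z (σ z) := ⟨1, by rw [zpow_one]⟩
            have h7 : σ.SameCycle (σ z) z := h7'.symm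
            have h8 := hnc.2 (σ z) m z x h6 hz1' hz2 h7 hSame.symm
            have h9 : σ.SameCycle x (σ z) := hSame.trans h8.symm
            exact absurd (hcyc (σ z) h9).1 (not_le.mpr h6)
        · by_cases hzs : z ∈ σ.support
          · exact hmax (σ z) (Equiv.Perm.apply_mem_support.mpr hzs)
          · rw [Equiv.Perm.notMem_support.mp hzs]
            exact le_of_lt hz2
      set τ := σ * (finRotate (n + 1))⁻¹ with hτ
      have hinv : ∀ k : ℕ, m < (τ ^ k) x ∧ (τ ^ k) x ≤ x := by
        intro k
        induction k with
        | zero =>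
          simp only [pow_zero, Equiv.Perm.one_apply]
          exact ⟨hmlt, le_refl x⟩
        | succ k ihk =>
          obtain ⟨ih1, ih2⟩ := ihk
          set y := (τ ^ k) x with hy
          have hky : (τ ^ (k + 1)) x = σ ((finRotate (n + 1))⁻¹ y) := by
            rw [pow_succ', Equiv.Perm.mul_apply, hτ, Equiv.Perm.mul_apply]
          set z := (finRotate (n + 1))⁻¹ y with hz
          have hzy : z + 1 = y := by
            have h0 : finRotate (n + 1) ((finRotate (n + 1))⁻¹ y) = y := Equiv.apply_symm_apply _ y
            rwa [← hz, finRotate_succ_apply] at h0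
          have hy0 : y ≠ 0 := by
            intro h0
            rw [h0] at ih1
            exact absurd ih1 (not_lt.mpr (Fin.zero_le m))
          have hval : z.val + 1 = y.val := fin_pred n z y hzy hy0
          have hmz : m ≤ z ∧ z < x := by
            rw [Fin.lt_def] at ih1 ⊢
            rw [Fin.le_def] at ih2 ⊢
            omega
          have h2 := hge z hmz.1 hmz.2
          rw [hky]
          exact h2
      have claimA : ¬ τ.SameCycle x m := by
        intro hS
        obtain ⟨i, -, hi⟩ := hS.exists_pow_eq'
        have h2 := (hinv i).1
        rw [hi] at h2
        exact lt_irrefl m h2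
      set σ' := Equiv.swap x m * σ with hσ'
      have hfix : σ' x = x := by rw [hσ', Equiv.Perm.mul_apply, hm, Equiv.swap_apply_right]
      have h'x : ∀ v, σ'.SameCycle x v → v = x := by
        rintro v ⟨i, hv⟩
        rw [Equiv.Perm.zpow_apply_eq_self_of_apply_eq_self hfix i] at hv
        exact hv.symm
      have h'same : ∀ u v, σ'.SameCycle u v → σ.SameCycle u v := by
        intro u v huv
        rcases sameCycle_swap_mul_subset σ x m u v huv with h2 | ⟨h2, h3⟩ | ⟨h2, h3⟩
        · exact h2
        · exact h2.trans (hSame.trans h3)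
        · exact h2.trans (hSame.symm.trans h3)
      have h'back : ∀ u v, u ≠ x → v ≠ x → σ.SameCycle u v → σ'.SameCycle u v := by
        intro u v hu hv huv
        rcases jrel_swap_mul_ge σ x m u v (Or.inl huv) with h2 | ⟨h2, h3⟩ | ⟨h2, h3⟩
        · exact h2
        · exact absurd (h'x u h2.symm) hu
        · exact absurd (h'x v h3) hv
      have hsub : σ'.support ⊆ σ.support := by
        intro y hy
        by_contra hys
        have hyy : σ y = y := Equiv.Perm.notMem_support.mp hys
        have hyx : y ≠ x := fun e => hys (e ▸ hx_mem)
        have hym : y ≠ m := fun e => hys (e ▸ hm_mem)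
        have h2 : σ' y = y := by
          rw [hσ', Equiv.Perm.mul_apply, hyy, Equiv.swap_apply_of_ne_of_ne hyx hym]
        exact (Equiv.Perm.mem_support.mp hy) h2
      have hcard' : σ'.support.card ≤ N := by
        have hxs : x ∉ σ'.support := Equiv.Perm.notMem_support.mpr hfix
        have h2 : σ'.support ⊂ σ.support := ⟨hsub, fun hs => hxs (hs hx_mem)⟩
        have h3 := Finset.card_lt_card h2
        omega
      have hnc' : IsNoncrossingPerm σ' := by
        constructor
        · intro u v huv
          by_cases hux : u = x
          · rw [hux] at huv
            have hvx : v = x := h'x v huv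
            rw [hux, hvx, hfix]
            exact ⟨fun h2 => absurd h2 (lt_irrefl x), fun _ => ⟨le_refl x, le_refl x⟩⟩
          · have hvx : v ≠ x := by
              intro e
              subst e
              exact hux (h'x u huv.symm)
            have hsv : σ.SameCycle u v := h'same u v huv
            by_cases hu2 : σ u = x
            · have hσ'u : σ' u = m := by
                rw [hσ', Equiv.Perm.mul_apply, hu2, Equiv.swap_apply_left]
              have hux'' : σ.SameCycle u x := ⟨1, by rw [zpow_one, hu2]⟩
              have hux' : σ.SameCycle x u := hux''.symm
              have hu_b := hcyc u hux'
              have hu_lt : u < x := lt_of_le_of_ne hu_b.2 hux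
              have hv_b := hcyc v (hux'.trans hsv)
              have hv_lt : v < x := lt_of_le_of_ne hv_b.2 hvx
              have h9 := (hnc.1 u v hsv).1 (by rw [hu2]; exact hu_lt)
              rw [hu2] at h9
              have hvu : v ≤ u := by
                by_contra hcon
                push_neg at hcon
                exact h9 ⟨hcon, hv_lt⟩
              rw [hσ'u]
              exact ⟨fun h2 => absurd (lt_of_lt_of_le h2 hu_b.1) (lt_irrefl u),
                fun _ => ⟨hv_b.1, hvu⟩⟩
            · have hσ'u : σ' u = σ u := by
                have h5 : σ u ≠ m := fun e => hux (σ.injective (by rw [e, hm]))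
                rw [hσ', Equiv.Perm.mul_apply, Equiv.swap_apply_of_ne_of_ne hu2 h5]
              rw [hσ'u]
              exact hnc.1 u v hsv
        · intro a b c d h1' h2' h3' h4' h5'
          have hax : a ≠ x := by
            intro e
            rw [e] at h4' h1'
            have hc := h'x c h4'
            rw [hc] at h2'
            exact absurd (h1'.trans h2') (lt_irrefl x)
          have hcx : c ≠ x := by
            intro e
            rw [e] at h4' h2'
            have ha := h'x a h4'.symm
            rw [ha] at h1'
            exact absurd (h1'.trans h2') (lt_irrefl x)
          have hbx : b ≠ x := by
            intro e
            rw [e] at h5' h2'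
            have hd := h'x d h5'
            rw [hd] at h3'
            exact absurd (h2'.trans h3') (lt_irrefl x)
          have hdx : d ≠ x := by
            intro e
            rw [e] at h5' h3'
            have hb := h'x b h5'.symm
            rw [hb] at h2'
            exact absurd (h2'.trans h3') (lt_irrefl x)
          have h6 := hnc.2 a b c d h1' h2' h3' (h'same a c h4') (h'same b d h5')
          exact h'back a b hax hbx h6
      have c1 : cc σ' = cc σ + 1 := cc_swap_mul_sameCycle σ (Ne.symm hmne) hSame
      have c2 : σ' * (finRotate (n + 1))⁻¹ = Equiv.swap x m * τ := by
        rw [hσ', hτ, mul_assoc]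
      have c3 : cc (Equiv.swap x m * τ) + 1 = cc τ :=
        cc_swap_mul_not_sameCycle τ (Ne.symm hmne) claimA
      have c4 := ih σ' hcard' hnc'
      rw [c2] at c4
      omega

/-- Multiplicativity of `φ(σ,τ) = |στ⁻¹| - |τ|` : for noncrossing `σ` one has
`φ(σ,γ) = φ(σ,σ)`, i.e. `|σγ⁻¹| - 1 = p - |σ| = |σσ⁻¹| - |σ|`. -/
theorem phi_mul_inv_multiplicative (p : ℕ) (hp : 0 < p)
    (σ : Equiv.Perm (Fin p)) (hσ : IsNoncrossingPerm σ) :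
    cycleCount (σ * (finRotate p)⁻¹) - cycleCount (finRotate p) = p - cycleCount σ ∧
    p - cycleCount σ = cycleCount (σ * σ⁻¹) - cycleCount σ := by
  obtain ⟨n, rfl⟩ : ∃ n, p = n + 1 := ⟨p - 1, by omega⟩
  have hkey := key_lemma n σ.support.card σ le_rfl hσ
  have hcc : ∀ f : Equiv.Perm (Fin (n + 1)), cycleCount f = cc f := fun f => rfl
  have hpos1 : 0 < cc σ := by
    have : Nonempty (Quotient (Equiv.Perm.SameCycle.setoid σ)) := ⟨Quotient.mk _ 0⟩
    exact Nat.card_pos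
  have hpos2 : 0 < cc (σ * (finRotate (n + 1))⁻¹) := by
    have : Nonempty (Quotient
        (Equiv.Perm.SameCycle.setoid (σ * (finRotate (n + 1))⁻¹))) := ⟨Quotient.mk _ 0⟩
    exact Nat.card_pos
  constructor
  · simp only [hcc]
    rw [cc_finRotate]
    omega
  · have h1 : σ * σ⁻¹ = 1 := mul_inv_cancel σ
    rw [h1]
    simp only [hcc]
    rw [cc_eq_card, Fintype.card_fin]
end

section
/- For any noncrossing permutation σ ∈ NC_p and the full cycle γ, the permutations σγ⁻¹ and γ⁻¹σ have the same number of cycles, namely p + 1 - |σ|. -/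
set_option linter.unusedSectionVars false
set_option linter.unusedVariables false

namespace KrewerasAux

open Equiv Equiv.Perm

variable {α : Type*} [Finite α] [DecidableEq α]

lemma sameCycle_nat {f : Equiv.Perm α} {x y : α} (h : f.SameCycle x y) :
    ∃ n : ℕ, (f ^ n) x = y := by
  obtain ⟨i, _, h⟩ := h.exists_pow_eq'
  exact ⟨i, h⟩

lemma orbit_closed {f : Equiv.Perm α} {P : α → Prop}
    (hP : ∀ z, P z → P (f z)) {x y : α} (h : f.SameCycle x y) (hx : P x) : P y := by
  obtain ⟨n, rfl⟩ := sameCycle_nat h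
  clear h
  induction n with
  | zero => simpa using hx
  | succ k ih =>
    rw [pow_succ', Equiv.Perm.mul_apply]
    exact hP _ ih

lemma step_sc (f : Equiv.Perm α) (x : α) : f.SameCycle x (f x) := ⟨1, by simp⟩

section Merge
variable {f : Equiv.Perm α} {u v : α}

lemma merge_gu : (f * Equiv.swap u v) u = f v := by simp
lemma merge_gv : (f * Equiv.swap u v) v = f u := by simp
lemma merge_gz {z : α} (hu : z ≠ u) (hv : z ≠ v) : (f * Equiv.swap u v) z = f z := by
  simp [Equiv.Perm.mul_apply, Equiv.swap_apply_of_ne_of_ne hu hv]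

/-- M1 : if u,v are in different cycles of f, they are in the same cycle of f * swap u v -/
lemma merge_M1 (h : ¬ f.SameCycle u v) : (f * Equiv.swap u v).SameCycle u v := by
  set g := f * Equiv.swap u v with hg
  by_contra hO
  by_cases hfv : f v = v
  · exact hO ⟨1, by simp [hg, hfv]⟩
  · have base : g.SameCycle u (f v) ∧ f.SameCycle v (f v) := by
      constructor
      · rw [show f v = g u from (merge_gu (f := f)).symm]; exact step_sc g u
      · exact step_sc f v
    have closed : ∀ z, (g.SameCycle u z ∧ f.SameCycle v z) →
        (g.SameCycle u (f z) ∧ f.SameCycle v (f z)) := by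
      rintro z ⟨h1, h2⟩
      have hzu : z ≠ u := by rintro rfl; exact h h2.symm
      have hzv : z ≠ v := by rintro rfl; exact hO h1
      exact ⟨h1.trans (merge_gz hzu hzv ▸ step_sc g z), h2.trans (step_sc f z)⟩
    have hv' : f.SameCycle (f v) v := (step_sc f v).symm
    exact hO (orbit_closed closed hv' base).1

/-- M2 -/
lemma merge_M2 (h : ¬ f.SameCycle u v) {x y : α} (hxy : f.SameCycle x y) :
    (f * Equiv.swap u v).SameCycle x y := by
  set g := f * Equiv.swap u v with hg
  have hstep : ∀ z, g.SameCycle z (f z) := by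
    intro z
    by_cases hzu : z = u
    · rw [hzu, show f u = g v from (merge_gv (f := f)).symm]
      exact (merge_M1 h).trans (step_sc g v)
    by_cases hzv : z = v
    · rw [hzv, show f v = g u from (merge_gu (f := f)).symm]
      exact (merge_M1 h).symm.trans (step_sc g u)
    · rw [show f z = g z from (merge_gz hzu hzv).symm]
      exact step_sc g z
  exact orbit_closed (P := fun z => g.SameCycle x z) (fun z hz => hz.trans (hstep z)) hxy
    (Equiv.Perm.SameCycle.refl g x)

/-- M3 -/
lemma merge_M3 {x y : α} (hxy : (f * Equiv.swap u v).SameCycle x y)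
    (hxu : ¬ (f * Equiv.swap u v).SameCycle x u) (h : ¬ f.SameCycle u v) :
    f.SameCycle x y := by
  set g := f * Equiv.swap u v with hg
  have closed : ∀ z, (f.SameCycle x z ∧ g.SameCycle x z) →
      (f.SameCycle x (g z) ∧ g.SameCycle x (g z)) := by
    rintro z ⟨h1, h2⟩
    have hzu : z ≠ u := by rintro rfl; exact hxu h2
    have hzv : z ≠ v := by rintro rfl; exact hxu (h2.trans (merge_M1 h).symm)
    refine ⟨?_, h2.trans (step_sc g z)⟩
    rw [merge_gz hzu hzv]
    exact h1.trans (step_sc f z)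
  exact (orbit_closed closed hxy ⟨.refl f x, .refl g x⟩).1

/-- M4 -/
lemma merge_M4 {x : α} (hx : (f * Equiv.swap u v).SameCycle u x) :
    f.SameCycle u x ∨ f.SameCycle v x := by
  set g := f * Equiv.swap u v with hg
  have closed : ∀ z, (f.SameCycle u z ∨ f.SameCycle v z) →
      (f.SameCycle u (g z) ∨ f.SameCycle v (g z)) := by
    intro z hz
    by_cases hzu : z = u
    · right; rw [hzu, merge_gu]; exact step_sc f v
    by_cases hzv : z = v
    · left; rw [hzv, merge_gv]; exact step_sc f u
    · rw [merge_gz hzu hzv]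
      exact hz.imp (fun h => h.trans (step_sc f z)) (fun h => h.trans (step_sc f z))
  exact orbit_closed closed hx (Or.inl (.refl f u))

lemma merge_card {f : Equiv.Perm α} {u v : α} (h : ¬ f.SameCycle u v) :
    Nat.card (Quotient (Equiv.Perm.SameCycle.setoid f))
      = Nat.card (Quotient (Equiv.Perm.SameCycle.setoid (f * Equiv.swap u v))) + 1 := by
  classical
  set g := f * Equiv.swap u v with hg
  have e : Quotient (Equiv.Perm.SameCycle.setoid f) ≃
      Option (Quotient (Equiv.Perm.SameCycle.setoid g)) := by
    refine
      { toFun := Quotient.lift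
          (fun x => if f.SameCycle x v then none else
            some (Quotient.mk (Equiv.Perm.SameCycle.setoid g) x)) ?_
        invFun := fun o => o.elim (Quotient.mk (Equiv.Perm.SameCycle.setoid f) v)
          (Quotient.lift (fun x => if g.SameCycle x u
            then Quotient.mk (Equiv.Perm.SameCycle.setoid f) u
            else Quotient.mk (Equiv.Perm.SameCycle.setoid f) x) ?_)
        left_inv := ?_
        right_inv := ?_ }
    · intro x y hxy
      replace hxy : f.SameCycle x y := hxy
      by_cases hv : f.SameCycle x v
      · simp only [if_pos hv, if_pos (hxy.symm.trans hv)]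
      · simp only [if_neg hv, if_neg (fun hy => hv (hxy.trans hy))]
        exact congrArg some (Quotient.sound (merge_M2 h hxy))
    · intro x y hxy
      replace hxy : g.SameCycle x y := hxy
      by_cases hu : g.SameCycle x u
      · simp only [if_pos hu, if_pos (hxy.symm.trans hu)]
      · simp only [if_neg hu, if_neg (fun hy => hu (hxy.trans hy))]
        exact Quotient.sound (merge_M3 hxy hu h)
    · refine Quotient.ind (fun x => ?_)
      by_cases hv : f.SameCycle x v
      · simp only [Quotient.lift_mk, if_pos hv, Option.elim]
        exact Quotient.sound hv.symm
      · simp only [Quotient.lift_mk, if_neg hv, Option.elim]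
        by_cases hu : g.SameCycle x u
        · rw [if_pos hu]
          rcases merge_M4 hu.symm with h1 | h2
          · exact Quotient.sound h1
          · exact absurd h2.symm hv
        · rw [if_neg hu]
    · rintro (_ | o)
      · simp only [Option.elim, Quotient.lift_mk]
        rw [if_pos (Equiv.Perm.SameCycle.refl f v)]
      · induction o using Quotient.ind with
        | _ x =>
        by_cases hu : g.SameCycle x u
        · simp only [Option.elim, Quotient.lift_mk, if_pos hu]
          simp only [if_neg h]
          exact congrArg some (Quotient.sound hu.symm)
        · simp only [Option.elim, Quotient.lift_mk, if_neg hu]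
          rw [if_neg ?_]
          intro hxv
          exact hu ((merge_M2 h hxv).trans (merge_M1 h).symm)
  rw [Nat.card_congr e, Finite.card_option]

end Merge

lemma cycleCount_one (p : ℕ) : cycleCount (1 : Equiv.Perm (Fin p)) = p := by
  have e : Quotient (Equiv.Perm.SameCycle.setoid (1 : Equiv.Perm (Fin p))) ≃ Fin p :=
    { toFun := Quotient.lift id (fun a b hab => Equiv.Perm.sameCycle_one.mp hab)
      invFun := Quotient.mk _
      left_inv := Quotient.ind (fun x => rfl)
      right_inv := fun x => rfl }
  rw [cycleCount, Nat.card_congr e, Nat.card_eq_fintype_card, Fintype.card_fin]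

lemma cycleCount_of_forall {p : ℕ} (hp : 0 < p) {f : Equiv.Perm (Fin p)}
    (h : ∀ x y, f.SameCycle x y) : cycleCount f = 1 := by
  rw [cycleCount, Nat.card_eq_one_iff_unique]
  constructor
  · constructor
    intro a b
    induction a using Quotient.ind with | _ x =>
    induction b using Quotient.ind with | _ y =>
    exact Quotient.sound (h x y)
  · exact ⟨Quotient.mk _ ⟨0, hp⟩⟩

lemma cycleCount_conj {p : ℕ} (f g : Equiv.Perm (Fin p)) :
    cycleCount (g * f * g⁻¹) = cycleCount f := by
  refine (Nat.card_congr (Quotient.congr g ?_)).symm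
  intro a b
  constructor
  · intro hab
    have hab' : f.SameCycle a b := hab
    exact Equiv.Perm.sameCycle_conj.mpr (by simpa using hab')
  · intro hab
    exact (by simpa using Equiv.Perm.sameCycle_conj.mp hab : f.SameCycle a b)

lemma cycleCount_le {p : ℕ} (f : Equiv.Perm (Fin p)) : cycleCount f ≤ p := by
  have := Nat.card_le_card_of_surjective
    (Quotient.mk (Equiv.Perm.SameCycle.setoid f)) (Quotient.mk_surjective)
  simpa [Nat.card_eq_fintype_card, cycleCount] using this

open Fin.NatCast Fin.CommRing in
lemma rot_pow (p : ℕ) (k : ℕ) (x : Fin (p+1)) :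
    ((finRotate (p+1)) ^ k) x = x + (k : Fin (p+1)) := by
  induction k with
  | zero => simp
  | succ n ih =>
    rw [pow_succ', Equiv.Perm.mul_apply, ih, finRotate_succ_apply]
    push_cast
    ring

open Fin.NatCast Fin.CommRing in
lemma rot_sameCycle (p : ℕ) (x y : Fin (p+1)) : (finRotate (p+1)).SameCycle x y := by
  refine ⟨((y - x).val : ℤ), ?_⟩
  rw [zpow_natCast, rot_pow, Fin.cast_val_eq_self]
  ring_nf

open Fin.NatCast Fin.CommRing in
lemma rot_inv_apply (p : ℕ) (x : Fin (p+1)) : (finRotate (p+1))⁻¹ x = x - 1 := by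
  rw [Equiv.Perm.inv_eq_iff_eq, finRotate_succ_apply]
  ring

/-- Detaching the maximum of a cycle of a noncrossing permutation keeps it noncrossing. -/
lemma nc_detach {p : ℕ} {σ : Equiv.Perm (Fin p)} (hσ : IsNoncrossingPerm σ) {a m : Fin p}
    (ha : σ a = m) (ham : a ≠ m) (hmax : ∀ y, σ.SameCycle m y → y ≤ m) :
    IsNoncrossingPerm (σ * Equiv.swap a m) := by
  set g := σ * Equiv.swap a m with hg
  have hgm : g m = m := by rw [hg]; simp [ha]
  have hσm_ne : σ m ≠ m := fun h => ham (σ.injective (ha.trans h.symm))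
  have scam : σ.SameCycle a m := ⟨1, by simpa using ha⟩
  have a_lt_m : a < m := lt_of_le_of_ne (hmax a scam.symm) ham
  have hσm_le : ∀ y, σ.SameCycle m y → σ m ≤ y := fun y hy =>
    ((hσ.1 m y hy).2 (hmax (σ m) (step_sc σ m))).1
  have hgap : ∀ y, σ.SameCycle a y → ¬(a < y ∧ y < m) := by
    intro y hy
    have := (hσ.1 a y hy).1
    rw [ha] at this
    exact this a_lt_m
  have hns : ¬ g.SameCycle a m := fun h => ham ((h.symm.eq_of_left hgm).symm)
  have hgs : g * Equiv.swap a m = σ := by rw [hg, mul_assoc, Equiv.swap_mul_self, mul_one]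
  have forward : ∀ {x y : Fin p}, g.SameCycle x y → σ.SameCycle x y := by
    intro x y h
    have := merge_M2 (f := g) (u := a) (v := m) hns h
    rwa [hgs] at this
  have hm_eq : ∀ x, g.SameCycle x m → x = m := fun x h => (h.symm.eq_of_left hgm).symm
  have back : ∀ x y : Fin p, x ≠ m → y ≠ m → σ.SameCycle x y → g.SameCycle x y := by
    intro x y hx hy hxy
    by_cases hxa : σ.SameCycle x a
    · have key : ∀ z : Fin p, z ≠ m → σ.SameCycle a z → g.SameCycle a z := by
        intro z hz hsz
        have hsz' : (g * Equiv.swap a m).SameCycle a z := by rw [hgs]; exact hsz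
        rcases merge_M4 (f := g) (u := a) (v := m) hsz' with h | h
        · exact h
        · exact absurd (hm_eq z h.symm) hz
      exact ((key x hx hxa.symm).symm.trans (key y hy (hxa.symm.trans hxy)))
    · refine merge_M3 (f := g) (u := a) (v := m) ?_ ?_ hns
      · rw [hgs]; exact hxy
      · rw [hgs]; exact hxa
  constructor
  · intro x y hxy
    by_cases hxm : x = m
    · subst hxm
      have hy : x = y := hxy.eq_of_left hgm
      constructor
      · intro hlt
        rw [hgm] at hlt
        exact absurd hlt (lt_irrefl _)
      · intro _
        rw [hgm]
        exact ⟨hy.le, hy.ge⟩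
    · have hym : y ≠ m := fun h => hxm (hm_eq x (h ▸ hxy))
      have hσxy : σ.SameCycle x y := forward hxy
      by_cases hxa : x = a
      · subst hxa
        have hga : g x = σ m := by rw [hg]; simp
        rw [hga]
        have hy_cyc : σ.SameCycle m y := scam.symm.trans hσxy
        have h1 : σ m ≤ x := hσm_le x scam.symm
        constructor
        · intro hlt
          exact absurd h1 (not_le.mpr hlt)
        · intro _
          refine ⟨hσm_le y hy_cyc, ?_⟩
          have hy_le_m : y ≤ m := hmax y hy_cyc
          have hgy : ¬(x < y ∧ y < m) := hgap y (scam.trans hy_cyc)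
          by_contra hya
          exact hgy ⟨lt_of_not_ge hya, lt_of_le_of_ne hy_le_m hym⟩
      · have hgx : g x = σ x := by
          rw [hg, Equiv.Perm.mul_apply, Equiv.swap_apply_of_ne_of_ne hxa hxm]
        rw [hgx]
        exact hσ.1 x y hσxy
  · intro b c d e hbc hcd hde h1 h2
    have hbd : b ≠ d := ne_of_lt (hbc.trans hcd)
    have hce : c ≠ e := ne_of_lt (hcd.trans hde)
    have hbm : b ≠ m := by rintro rfl; exact hbd (h1.eq_of_left hgm)
    have hdm : d ≠ m := by rintro rfl; exact hbd (hm_eq b h1)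
    have hcm : c ≠ m := by rintro rfl; exact hce (h2.eq_of_left hgm)
    have hem : e ≠ m := by rintro rfl; exact hce (hm_eq c h2)
    exact back b c hbm hcm (hσ.2 b c d e hbc hcd hde (forward h1) (forward h2))



lemma key (p : ℕ) (n : ℕ) (σ : Equiv.Perm (Fin (p+1))) (hcard : σ.support.card ≤ n)
    (hσ : IsNoncrossingPerm σ) :
    cycleCount (σ * (finRotate (p+1))⁻¹) = (p+1) + 1 - cycleCount σ := by
  induction n generalizing σ with
  | zero =>
    have : σ = 1 := Equiv.Perm.support_eq_empty_iff.mp (Finset.card_eq_zero.mp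
      (Nat.le_zero.mp hcard))
    subst this
    rw [one_mul, cycleCount_one, cycleCount_of_forall (Nat.succ_pos p)
      (fun x y => Equiv.Perm.sameCycle_inv.mpr (rot_sameCycle p x y))]
    omega
  | succ n ih =>
    by_cases h1 : σ = 1
    · subst h1
      rw [one_mul, cycleCount_one, cycleCount_of_forall (Nat.succ_pos p)
        (fun x y => Equiv.Perm.sameCycle_inv.mpr (rot_sameCycle p x y))]
      omega
    · have hne : σ.support.Nonempty := by
        rw [Finset.nonempty_iff_ne_empty]
        intro h
        exact h1 (Equiv.Perm.support_eq_empty_iff.mp h)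
      set m := σ.support.max' hne with hm_def
      have hm_supp : m ∈ σ.support := σ.support.max'_mem hne
      have hσm_ne : σ m ≠ m := Equiv.Perm.mem_support.mp hm_supp
      have hmax : ∀ y, σ.SameCycle m y → y ≤ m := by
        intro y hy
        have : y ∈ σ.support := by
          rw [Equiv.Perm.mem_support]
          intro hfix
          exact hσm_ne (hy.apply_eq_self_iff.mpr hfix)
        exact σ.support.le_max' y this
      set a := σ⁻¹ m with ha_def
      have ha : σ a = m := σ.apply_symm_apply m
      have ham : a ≠ m := by
        intro h
        rw [h] at ha
        exact hσm_ne ha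
      have scam : σ.SameCycle a m := ⟨1, by simpa using ha⟩
      have a_lt_m : a < m := lt_of_le_of_ne (hmax a scam.symm) ham
      have hgap : ∀ y, σ.SameCycle a y → ¬(a < y ∧ y < m) := by
        intro y hy
        have := (hσ.1 a y hy).1
        rw [ha] at this
        exact this a_lt_m
      have key_mid : ∀ y : Fin (p+1), a < y → y < m → a < σ y ∧ σ y < m := by
        intro y hay hym
        by_cases hfix : σ y = y
        · rw [hfix]; exact ⟨hay, hym⟩
        · have hy_supp : y ∈ σ.support := Equiv.Perm.mem_support.mpr hfix
          have hy_not : ¬ σ.SameCycle m y := by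
            intro hmy
            exact hgap y (scam.trans hmy) ⟨hay, hym⟩
          have hσy_le : σ y ≤ m :=
            σ.support.le_max' (σ y) (Equiv.Perm.apply_mem_support.mpr hy_supp)
          have hσy_ne_m : σ y ≠ m := by
            intro h
            have hya : y = a := σ.injective (h.trans ha.symm)
            rw [hya] at hay
            exact absurd hay (lt_irrefl a)
          have h2 : σ y < m := lt_of_le_of_ne hσy_le hσy_ne_m
          refine ⟨?_, h2⟩
          by_contra hle
          push_neg at hle
          have hne_a : σ y ≠ a := by
            intro h
            apply hy_not
            exact scam.symm.trans ((h ▸ step_sc σ y).symm)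
          have h3 : σ y < a := lt_of_le_of_ne hle hne_a
          have hcr := hσ.2 (σ y) a y m h3 hay hym ((step_sc σ y).symm) scam
          exact hy_not (scam.symm.trans (hcr.symm.trans (step_sc σ y).symm))
      set γ := finRotate (p+1) with hγ
      set δ := σ * γ⁻¹ with hδ_def
      have huv : γ a ≠ γ m := fun h => ham (γ.injective h)
      have ham' : a.val < m.val := a_lt_m
      have hmval : m.val < p + 1 := m.isLt
      have ha_last : a < Fin.last p := by
        rw [Fin.lt_def, Fin.val_last]
        omega
      have hvals : (γ a).val = a.val + 1 := by
        rw [hγ, finRotate_succ_apply]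
        exact Fin.val_add_one_of_lt ha_last
      have hSinv : ∀ x : Fin (p+1), a < x ∧ x ≤ m → a < δ x ∧ δ x ≤ m := by
        rintro x ⟨hax, hxm⟩
        have hδx : δ x = σ (γ⁻¹ x) := rfl
        set y := γ⁻¹ x with hy_def
        have hxy : γ y = x := γ.apply_symm_apply x
        have hyval : x.val = y.val + 1 := by
          by_cases hylast : y = Fin.last p
          · rw [hylast] at hxy
            rw [hγ, finRotate_succ_apply, Fin.last_add_one] at hxy
            rw [← hxy] at hax
            exact absurd hax (by rw [Fin.lt_def]; simp)
          · have : y < Fin.last p := lt_of_le_of_ne (Fin.le_last y) hylast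
            rw [← hxy, hγ, finRotate_succ_apply]
            exact Fin.val_add_one_of_lt this
        have hax' : a.val < x.val := hax
        have hxm' : x.val ≤ m.val := hxm
        by_cases hya : y = a
        · rw [hδx, hya, ha]
          exact ⟨a_lt_m, le_refl m⟩
        · have hay : a < y := by
            rw [Fin.lt_def]
            have : a.val ≠ y.val := fun h => hya (Fin.ext h.symm)
            omega
          have hym' : y < m := by rw [Fin.lt_def]; omega
          obtain ⟨l, r⟩ := key_mid y hay hym'
          rw [hδx]
          exact ⟨l, r.le⟩
      have hu_in : a < γ a ∧ γ a ≤ m := by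
        constructor
        · rw [Fin.lt_def, hvals]; omega
        · rw [Fin.le_def, hvals]; omega
      have hv_out : ¬(a < γ m ∧ γ m ≤ m) := by
        rintro ⟨h1', h2'⟩
        by_cases hm_last : m = Fin.last p
        · rw [hγ, finRotate_succ_apply, hm_last, Fin.last_add_one] at h1'
          rw [Fin.lt_def] at h1'
          simp at h1'
        · have : m < Fin.last p := lt_of_le_of_ne (Fin.le_last m) hm_last
          have hγmval : (γ m).val = m.val + 1 := by
            rw [hγ, finRotate_succ_apply]
            exact Fin.val_add_one_of_lt this
          rw [Fin.le_def, hγmval] at h2'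
          omega
      have hnc : ¬ δ.SameCycle (γ a) (γ m) := by
        intro hsc
        exact hv_out (orbit_closed (P := fun z => a < z ∧ z ≤ m) hSinv hsc hu_in)
      have hδcount : cycleCount δ = cycleCount (δ * Equiv.swap (γ a) (γ m)) + 1 :=
        merge_card hnc
      set σ' := σ * Equiv.swap a m with hσ'_def
      have hrew : δ * Equiv.swap (γ a) (γ m) = σ' * γ⁻¹ := by
        rw [Equiv.swap_apply_apply, hδ_def, hσ'_def]
        group
      have hσ'm : σ' m = m := by rw [hσ'_def]; simp [ha]
      have hnsam : ¬ σ'.SameCycle a m := fun h =>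
        ham ((h.symm.eq_of_left hσ'm).symm)
      have hσ'swap : σ' * Equiv.swap a m = σ := by
        rw [hσ'_def, mul_assoc, Equiv.swap_mul_self, mul_one]
      have hσcount : cycleCount σ' = cycleCount σ + 1 := by
        have h := merge_card (f := σ') (u := a) (v := m) hnsam
        rw [hσ'swap] at h
        exact h
      have hσ'nc : IsNoncrossingPerm σ' := nc_detach hσ ha ham hmax
      have hsup : σ'.support.card < σ.support.card := by
        apply Finset.card_lt_card
        rw [Finset.ssubset_def]
        constructor
        · intro x hx
          rw [Equiv.Perm.mem_support] at hx ⊢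
          intro hfix
          apply hx
          have hxa : x ≠ a := by
            intro h
            rw [h] at hfix
            rw [hfix] at ha
            exact ham (ha.symm ▸ rfl)
          have hxm : x ≠ m := by
            intro h
            rw [h] at hfix
            exact hσm_ne hfix
          rw [hσ'_def, Equiv.Perm.mul_apply, Equiv.swap_apply_of_ne_of_ne hxa hxm]
          exact hfix
        · intro hsub
          have := hsub hm_supp
          rw [Equiv.Perm.mem_support] at this
          exact this hσ'm
      have hIH := ih σ' (by omega) hσ'nc
      have hle : cycleCount σ ≤ p + 1 := cycleCount_le σ
      rw [hrew] at hδcount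
      omega



end KrewerasAux

/-- For a noncrossing permutation `σ` and the full cycle `γ`, the permutations
`σγ⁻¹` and `γ⁻¹σ` have the same number of cycles, namely `p + 1 - |σ|`. -/
theorem cycleCount_kreweras (p : ℕ) (hp : 0 < p)
    (σ : Equiv.Perm (Fin p)) (hσ : IsNoncrossingPerm σ) :
    cycleCount (σ * (finRotate p)⁻¹) = cycleCount ((finRotate p)⁻¹ * σ) ∧
    cycleCount (σ * (finRotate p)⁻¹) = p + 1 - cycleCount σ := by
  obtain ⟨p', rfl⟩ : ∃ p', p = p' + 1 := ⟨p - 1, by omega⟩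
  constructor
  · have h : (finRotate (p'+1))⁻¹ * σ =
        (finRotate (p'+1))⁻¹ * (σ * (finRotate (p'+1))⁻¹) * ((finRotate (p'+1))⁻¹)⁻¹ := by
      group
    rw [h, KrewerasAux.cycleCount_conj]
  · exact KrewerasAux.key p' σ.support.card σ le_rfl hσ
end

section
/- Let E = diag(1, w, ..., w^{n-1}) ∈ M_n(ℂ) with w = e^{2πi/n}, and let Λ ∈ M_n(ℂ)⊗M_n(ℂ) have entries Λ_{ab,cd} = δ_{ab}δ_{cd}w^a (the Choi matrix of φ(A)=EA). Then for any σ, τ ∈ S_p and signs e_1,...,e_p ∈ {+1,-1}: n^{-|σ|-|τ|} Σ_{i_1,...,i_p} Π_s δ_{i_{σ(s)} i_{τ(s)}} w^{e_s i_s} = n^{|στ⁻¹|-|σ|-|τ|} · Π_{β block of the orbit partition of στ⁻¹} [n divides Σ_{b∈β} e_b]. -/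
open Complex Finset in
private lemma prod_zpow_eq_zpow_sum {ι : Type*} (s : Finset ι) (w : ℂ) (hw : w ≠ 0)
    (f : ι → ℤ) : ∏ i ∈ s, w ^ (f i) = w ^ (∑ i ∈ s, f i) := by
  induction s using Finset.cons_induction with
  | empty => simp
  | cons a s ha ih => rw [Finset.prod_cons, Finset.sum_cons, ih, ← zpow_add₀ hw]

open Complex in
private lemma geom_indicator (n : ℕ) (hn : n ≠ 0) (m : ℤ) :
    ∑ k : Fin n, (Complex.exp (2 * Real.pi * I / n) ^ m) ^ (k : ℕ)
      = if (n : ℤ) ∣ m then (n : ℂ) else 0 := by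
  have hprim := Complex.isPrimitiveRoot_exp n hn
  by_cases h : (n : ℤ) ∣ m
  · rw [if_pos h, (hprim.zpow_eq_one_iff_dvd m).2 h]
    simp
  · rw [if_neg h]
    have h1 : Complex.exp (2 * Real.pi * I / n) ^ m ≠ 1 :=
      fun hc => h ((hprim.zpow_eq_one_iff_dvd m).1 hc)
    have hpow : (Complex.exp (2 * Real.pi * I / n) ^ m) ^ n = 1 := by
      rw [← zpow_natCast, ← zpow_mul, mul_comm m (n : ℤ), zpow_mul, zpow_natCast,
        hprim.pow_eq_one, one_zpow]
    rw [Fin.sum_univ_eq_sum_range (fun k => (Complex.exp (2 * Real.pi * I / n) ^ m) ^ k) n,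
      geom_sum_eq h1, hpow]
    simp

open Complex in
/-- Generalized `*`-moments for the Choi matrix of `φ(A) = EA`,
`E = diag(1, w, ..., w^{n-1})`, `w = e^{2πi/n}`:
`n^{-|σ|-|τ|} Σ_i Π_s δ_{i_{σ(s)} i_{τ(s)}} w^{e_s i_s}` equals
`n^{|στ⁻¹|-|σ|-|τ|}` times the product over blocks `β` of the orbit partition of `στ⁻¹`
of the indicator `[n ∣ Σ_{b∈β} e_b]` (equivalently, the indicator that every block sum
of the weights is divisible by `n`). -/
theorem generalized_star_moment_bessel (n p : ℕ) (hn : 0 < n)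
    (σ τ : Equiv.Perm (Fin p)) (e : Fin p → ℤ) (he : ∀ s, e s = 1 ∨ e s = -1) :
    (n : ℂ) ^ (-(cycleCount σ : ℤ) - (cycleCount τ : ℤ)) *
      ∑ i : Fin p → Fin n, ∏ s : Fin p,
        (if i (σ s) = i (τ s)
          then Complex.exp (2 * Real.pi * I / n) ^ (e s * (i s : ℤ)) else 0)
    = (n : ℂ) ^ ((cycleCount (σ * τ⁻¹) : ℤ) - cycleCount σ - cycleCount τ) *
      (if ∀ x : Fin p,
          (n : ℤ) ∣ ∑ y ∈ Finset.univ.filter (fun y => (σ * τ⁻¹).SameCycle x y), e y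
        then 1 else 0) := by
  classical
  set w := Complex.exp (2 * Real.pi * I / n) with hwdef
  have hw0 : w ≠ 0 := Complex.exp_ne_zero _
  have hnC : (n : ℂ) ≠ 0 := Nat.cast_ne_zero.2 hn.ne'
  set c := σ * τ⁻¹ with hcdef
  -- the quotient by orbits of c
  haveI : DecidableRel (Equiv.Perm.SameCycle.setoid c).r :=
    fun a b => inferInstanceAs (Decidable (c.SameCycle a b))
  let Q := Quotient (Equiv.Perm.SameCycle.setoid c)
  let mkq : Fin p → Q := Quotient.mk _
  have hQcard : cycleCount c = Fintype.card Q := Nat.card_eq_fintype_card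
  -- block sums
  let E : Q → ℤ := fun q => ∑ s ∈ Finset.univ.filter (fun s => mkq s = q), e s
  have key :
      (∑ i : Fin p → Fin n, ∏ s : Fin p,
        (if i (σ s) = i (τ s) then w ^ (e s * (i s : ℤ)) else 0))
      = (n : ℂ) ^ (cycleCount c) *
        (if ∀ x : Fin p,
            (n : ℤ) ∣ ∑ y ∈ Finset.univ.filter (fun y => c.SameCycle x y), e y
          then 1 else 0) := by
    -- step 1: push the ite out of the product
    have step1 : (∑ i : Fin p → Fin n, ∏ s : Fin p,
        (if i (σ s) = i (τ s) then w ^ (e s * (i s : ℤ)) else 0))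
        = ∑ i ∈ Finset.univ.filter (fun i : Fin p → Fin n => ∀ s, i (σ s) = i (τ s)),
            w ^ (∑ s : Fin p, e s * (i s : ℤ)) := by
      rw [Finset.sum_filter]
      refine Finset.sum_congr rfl fun i _ => ?_
      rw [Fintype.prod_ite_zero]
      split_ifs with h
      · rw [prod_zpow_eq_zpow_sum _ _ hw0]
      · rfl
    -- invariance on orbits
    have hinv : ∀ i : Fin p → Fin n, (∀ s, i (σ s) = i (τ s)) →
        ∀ x y, c.SameCycle x y → i x = i y := by
      intro i h x y hxy
      have hfix : ∀ t, i (c t) = i t := by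
        intro t
        have := h (τ⁻¹ t)
        simpa [hcdef, Equiv.Perm.mul_apply] using this
      obtain ⟨k, hk⟩ := hxy
      subst hk
      induction k using Int.induction_on with
      | zero => simp
      | succ k ih =>
          have : (c ^ ((k : ℤ) + 1)) x = c ((c ^ (k : ℤ)) x) := by
            rw [add_comm, zpow_add, zpow_one, Equiv.Perm.mul_apply]
          rw [this, hfix]
          exact ih
      | pred k ih =>
          have : (c ^ (-(k : ℤ) - 1)) x = c⁻¹ ((c ^ (-(k : ℤ))) x) := by
            rw [sub_eq_add_neg, add_comm, zpow_add, zpow_neg_one, Equiv.Perm.mul_apply]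
          rw [this]
          have h2 : i (c⁻¹ ((c ^ (-(k : ℤ))) x)) = i ((c ^ (-(k : ℤ))) x) := by
            conv_rhs => rw [← Equiv.apply_symm_apply c ((c ^ (-(k : ℤ))) x)]
            rw [hfix]
            rfl
          rw [h2]
          exact ih
    -- step 2: reindex by functions on the quotient
    have step2 :
        (∑ i ∈ Finset.univ.filter (fun i : Fin p → Fin n => ∀ s, i (σ s) = i (τ s)),
            w ^ (∑ s : Fin p, e s * (i s : ℤ)))
        = ∑ j : Q → Fin n, w ^ (∑ s : Fin p, e s * ((j (mkq s)) : ℤ)) := by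
      refine Finset.sum_nbij' (fun i => (fun q => i q.out))
        (fun j => (fun s => j (mkq s))) ?_ ?_ ?_ ?_ ?_
      · intro a _; exact Finset.mem_univ _
      · intro j _
        simp only [Finset.mem_filter, Finset.mem_univ, true_and]
        intro s
        have : mkq (σ s) = mkq (τ s) := by
          apply Quotient.sound
          show c.SameCycle (σ s) (τ s)
          refine ⟨-1, ?_⟩
          simp [hcdef, Equiv.Perm.mul_apply]
        rw [this]
      · intro i hi
        simp only [Finset.mem_filter, Finset.mem_univ, true_and] at hi
        funext s
        exact hinv i hi _ _ (Quotient.exact (Quotient.out_eq (mkq s)))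
      · intro j _
        funext q
        induction q using Quotient.ind with
        | _ s => exact congrArg j (Quotient.out_eq (mkq s))
      · intro i hi
        simp only [Finset.mem_filter, Finset.mem_univ, true_and] at hi
        congr 1
        refine Finset.sum_congr rfl fun s _ => ?_
        rw [hinv i hi s (Quotient.out (mkq s)) (Quotient.exact (Quotient.out_eq (mkq s)).symm)]
    -- step 3: group the exponent sum by fibers
    have step3 : ∀ j : Q → Fin n,
        (∑ s : Fin p, e s * ((j (mkq s)) : ℤ)) = ∑ q : Q, E q * ((j q) : ℤ) := by
      intro j
      rw [← Finset.sum_fiberwise_of_maps_to (fun s _ => Finset.mem_univ (mkq s))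
        (fun s => e s * ((j (mkq s)) : ℤ))]
      refine Finset.sum_congr rfl fun q _ => ?_
      rw [Finset.sum_mul]
      refine Finset.sum_congr rfl fun s hs => ?_
      rw [(Finset.mem_filter.1 hs).2]
    -- step 4: factor the sum into a product over orbits
    have step4 :
        (∑ j : Q → Fin n, w ^ (∑ s : Fin p, e s * ((j (mkq s)) : ℤ)))
        = ∏ q : Q, ∑ k : Fin n, (w ^ (E q)) ^ (k : ℕ) := by
      rw [Fintype.prod_sum (κ := fun _ : Q => Fin n) (fun q k => (w ^ (E q)) ^ ((k : Fin n) : ℕ))]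
      refine Finset.sum_congr rfl fun j _ => ?_
      rw [step3 j, ← prod_zpow_eq_zpow_sum _ _ hw0]
      refine Finset.prod_congr rfl fun q _ => ?_
      rw [zpow_mul, zpow_natCast]
    -- step 5: evaluate each geometric sum
    have step5 : (∏ q : Q, ∑ k : Fin n, (w ^ (E q)) ^ (k : ℕ))
        = if ∀ q : Q, (n : ℤ) ∣ E q then (n : ℂ) ^ (Fintype.card Q) else 0 := by
      have : ∀ q : Q, (∑ k : Fin n, (w ^ (E q)) ^ (k : ℕ))
          = if (n : ℤ) ∣ E q then (n : ℂ) else 0 := fun q => geom_indicator n hn.ne' (E q)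
      rw [Finset.prod_congr rfl (fun q _ => this q), Fintype.prod_ite_zero]
      simp [Finset.prod_const]
    -- step 6: translate the divisibility condition
    have hEfilter : ∀ x : Fin p, E (mkq x)
        = ∑ y ∈ Finset.univ.filter (fun y => c.SameCycle x y), e y := by
      intro x
      show (∑ s ∈ Finset.univ.filter (fun s => mkq s = mkq x), e s) = _
      refine Finset.sum_congr ?_ fun _ _ => rfl
      refine Finset.filter_congr fun s _ => ?_
      constructor
      · intro hs; exact (Quotient.exact hs).symm
      · intro hs; exact Quotient.sound hs.symm
    have step6 : (∀ q : Q, (n : ℤ) ∣ E q) ↔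
        (∀ x : Fin p,
          (n : ℤ) ∣ ∑ y ∈ Finset.univ.filter (fun y => c.SameCycle x y), e y) := by
      constructor
      · intro h x
        have := h (mkq x)
        rwa [hEfilter x] at this
      · intro h q
        induction q using Quotient.ind with
        | _ x =>
          show (n : ℤ) ∣ E (mkq x)
          rw [hEfilter x]
          exact h x
    rw [step1, step2, step4, step5, hQcard]
    by_cases hall : ∀ q : Q, (n : ℤ) ∣ E q
    · rw [if_pos hall, if_pos (step6.1 hall), mul_one]
    · rw [if_neg hall, if_neg (fun hx => hall (step6.2 hx)), mul_zero]
  rw [key, show (cycleCount c : ℤ) - cycleCount σ - cycleCount τ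
      = (-(cycleCount σ : ℤ) - cycleCount τ) + cycleCount c by ring,
    zpow_add₀ hnC, zpow_natCast]
  simp only [mul_assoc]
  congr!
end
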